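/- arXiv:math/0512420 — 2 statements merged into one kernel-verified Lean document; each statement's English description precedes it below -/
import Mathlib

section
/- If G is a claw-free graph with maximal degree d, u ∈ V(G), and v₁, v₂ ∈ N(u) are two nonadjacent vertices, then #(Ṅ(u) ∪ (N(v₁) ∩ N(v₂))) ≤ ⌊(3d+2)/2⌋. -/
open SimpleGraph

/-- A claw in `G` on center `u` and leaves `v₁, v₂, v₃`. -/
def SimpleGraph.IsClaw {V : Type*} (G : SimpleGraph V) (u v₁ v₂ v₃ : V) : Prop :=
  v₁ ≠ v₂ ∧ v₁ ≠ v₃ ∧ v₂ ≠ v₃ ∧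
  G.Adj u v₁ ∧ G.Adj u v₂ ∧ G.Adj u v₃ ∧
  ¬G.Adj v₁ v₂ ∧ ¬G.Adj v₁ v₃ ∧ ¬G.Adj v₂ v₃

/-- A graph is claw-free if it has no induced claw. -/
def SimpleGraph.ClawFree {V : Type*} (G : SimpleGraph V) : Prop :=
  ∀ u v₁ v₂ v₃ : V, ¬ G.IsClaw u v₁ v₂ v₃

/-- The closed neighborhood `Ṅ(v) = N(v) ∪ {v}`. -/
def SimpleGraph.closedNbhd {V : Type*} (G : SimpleGraph V) (v : V) : Set V :=
  insert v (G.neighborSet v)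

/-- The set of faces of the independence complex `Ind(G)`. -/
def indepFaces {V : Type*} (G : SimpleGraph V) : Set (Finset V) :=
  {s | ∀ a ∈ s, ∀ b ∈ s, ¬ G.Adj a b}

/-- The geometric realization of an abstract simplicial complex with vertex set `V`. -/
def realization {V : Type*} (K : Set (Finset V)) : Type _ :=
  {f : V → ℝ // (∀ v, 0 ≤ f v) ∧ (∑ᶠ v, f v) = 1 ∧ ∃ s ∈ K, {v | f v ≠ 0} = ↑s}

instance {V : Type*} (K : Set (Finset V)) : TopologicalSpace (realization K) :=
  instTopologicalSpaceSubtype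

/-- A space is `n`-connected (`n : ℤ`) if it is nonempty when `n ≥ -1` and every continuous
map from the `i`-sphere extends to the `(i+1)`-ball for all `0 ≤ i ≤ n`. -/
def IsNConnected (n : ℤ) (X : Type*) [TopologicalSpace X] : Prop :=
  (-1 ≤ n → Nonempty X) ∧
  ∀ i : ℕ, (i : ℤ) ≤ n →
    ∀ f : C(Metric.sphere (0 : EuclideanSpace ℝ (Fin (i + 1))) 1, X),
      ∃ g : C(Metric.closedBall (0 : EuclideanSpace ℝ (Fin (i + 1))) 1, X),
        ∀ x : Metric.sphere (0 : EuclideanSpace ℝ (Fin (i + 1))) 1,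
          g ⟨x.1, Metric.sphere_subset_closedBall x.2⟩ = f x

/-- Relation generating the unreduced suspension: glue `X × {0}` to a south pole and
`X × {1}` to a north pole. -/
def SuspRel (X : Type*) : X × unitInterval ⊕ Bool → X × unitInterval ⊕ Bool → Prop :=
  fun a b => (∃ x, a = Sum.inl (x, 0) ∧ b = Sum.inr false) ∨
    (∃ x, a = Sum.inl (x, 1) ∧ b = Sum.inr true)

/-- The unreduced suspension of a space. -/
def Susp (X : Type*) [TopologicalSpace X] : Type _ := Quot (SuspRel X)

instance (X : Type*) [TopologicalSpace X] : TopologicalSpace (Susp X) :=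
  instTopologicalSpaceQuot

/-- The north pole of a suspension. -/
def Susp.north (X : Type*) [TopologicalSpace X] : Susp X := Quot.mk _ (Sum.inr true)

/-- Relation generating the wedge sum of a family of pointed spaces. -/
def WedgeRel {ι : Type*} (X : ι → Type*) (pt : ∀ i, X i) :
    (Σ i, X i) ⊕ Unit → (Σ i, X i) ⊕ Unit → Prop :=
  fun a b => ∃ i, a = Sum.inl ⟨i, pt i⟩ ∧ b = Sum.inr ()

/-- The wedge sum of a family of pointed spaces. -/
def Wedge {ι : Type*} (X : ι → Type*) [∀ i, TopologicalSpace (X i)] (pt : ∀ i, X i) :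
    Type _ :=
  Quot (WedgeRel X pt)

instance {ι : Type*} (X : ι → Type*) [∀ i, TopologicalSpace (X i)] (pt : ∀ i, X i) :
    TopologicalSpace (Wedge X pt) :=
  instTopologicalSpaceQuot

/-- The graph `L^k_n`: vertices `{1, …, n}`, with `i < j` adjacent iff `j - i < k`. -/
def lineGraphL (n k : ℕ) : SimpleGraph (Fin n) :=
  SimpleGraph.fromRel (fun i j => (i : ℕ) < j ∧ (j : ℕ) - i < k)

/-- The graph `C^k_n`: vertices `{1, …, n}`, with `i < j` adjacent iff `j - i < k` or
`(n + i) - j < k`. -/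
def circGraphC (n k : ℕ) : SimpleGraph (Fin n) :=
  SimpleGraph.fromRel (fun i j => (i : ℕ) < j ∧ ((j : ℕ) - i < k ∨ (n + i) - j < k))

/-- One elementary collapse step: remove a free face `σ` together with the unique face
`τ` properly containing it (with `τ` of one dimension higher). -/
def ElemCollapse {V : Type*} (K L : Set (Finset V)) : Prop :=
  ∃ σ τ : Finset V, σ ∈ K ∧ τ ∈ K ∧ σ ⊂ τ ∧ τ.card = σ.card + 1 ∧
    (∀ ρ ∈ K, σ ⊂ ρ → ρ = τ) ∧ L = K \ {σ, τ}

/-- `K` collapses onto `L` if there is a finite sequence of elementary collapses from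
`K` to `L`. -/
def Collapses {V : Type*} (K L : Set (Finset V)) : Prop :=
  Relation.ReflTransGen ElemCollapse K L

/-- If `G` is claw-free with maximal degree `d`, `u ∈ V(G)` and
`v₁, v₂ ∈ N(u)` are nonadjacent, then `#(Ṅ(u) ∪ (N(v₁) ∩ N(v₂))) ≤ ⌊(3d+2)/2⌋`. -/
theorem card_closedNbhd_union_common_nbhd_le {V : Type*} [Fintype V] [DecidableEq V]
    (G : SimpleGraph V) [DecidableRel G.Adj] (hG : G.ClawFree) (d : ℕ)
    (hd : G.maxDegree = d) (u v₁ v₂ : V)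
    (h₁ : v₁ ∈ G.neighborSet u) (h₂ : v₂ ∈ G.neighborSet u)
    (hne : v₁ ≠ v₂) (hnadj : ¬ G.Adj v₁ v₂) :
    ((insert u (G.neighborFinset u)) ∪
        (G.neighborFinset v₁ ∩ G.neighborFinset v₂)).card ≤ (3 * d + 2) / 2 := by
  classical
  set Nu := G.neighborFinset u with hNuDef
  set N1 := G.neighborFinset v₁ with hN1Def
  set N2 := G.neighborFinset v₂ with hN2Def
  set S := (N1 ∩ N2) \ (insert u Nu) with hSDef
  set T1 := (Nu \ {v₁, v₂}) ∩ N1 with hT1Def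
  set T2 := (Nu \ {v₁, v₂}) ∩ N2 with hT2Def
  have huNu : u ∉ Nu := by simp [hNuDef]
  -- lower bound on deg v₁
  have key : ∀ (v : V) (Nv Tv : Finset V), Nv = G.neighborFinset v →
      Tv = (Nu \ {v₁, v₂}) ∩ Nv → G.Adj v u → N1 ∩ N2 ⊆ Nv →
      1 + S.card + Tv.card ≤ Nv.card := by
    intro v Nv Tv hNv hTv hadj hNN
    have hsub : insert u (S ∪ Tv) ⊆ Nv := by
      intro x hx
      simp only [Finset.mem_insert, Finset.mem_union] at hx
      rcases hx with rfl | hx | hx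
      · rw [hNv]; simpa using hadj
      · exact hNN (Finset.mem_sdiff.mp hx).1
      · exact (Finset.mem_inter.mp (hTv ▸ hx)).2
    have hdisj : Disjoint S Tv := by
      apply Finset.disjoint_left.mpr
      intro x hxS hxT
      have h1 : x ∉ insert u Nu := (Finset.mem_sdiff.mp hxS).2
      have h2 : x ∈ Nu := Finset.mem_sdiff.mp (Finset.mem_inter.mp (hTv ▸ hxT)).1 |>.1
      exact h1 (Finset.mem_insert_of_mem h2)
    have huS : u ∉ S ∪ Tv := by
      simp only [Finset.mem_union]
      rintro (h | h)
      · exact (Finset.mem_sdiff.mp h).2 (Finset.mem_insert_self _ _)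
      · exact huNu (Finset.mem_sdiff.mp (Finset.mem_inter.mp (hTv ▸ h)).1).1
    calc 1 + S.card + Tv.card = (insert u (S ∪ Tv)).card := by
          rw [Finset.card_insert_of_notMem huS, Finset.card_union_of_disjoint hdisj]; ring
      _ ≤ Nv.card := Finset.card_le_card hsub
  have hb1 : 1 + S.card + T1.card ≤ N1.card := key v₁ N1 T1 hN1Def hT1Def (G.adj_symm (by simpa using h₁)) Finset.inter_subset_left
  have hb2 : 1 + S.card + T2.card ≤ N2.card := key v₂ N2 T2 hN2Def hT2Def (G.adj_symm (by simpa using h₂)) Finset.inter_subset_right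
  -- claw-freeness: Nu \ {v₁,v₂} ⊆ T1 ∪ T2
  have hcover : Nu.card ≤ T1.card + T2.card + 2 := by
    have hsub : Nu \ {v₁, v₂} ⊆ T1 ∪ T2 := by
      intro w hw
      have hwNu := (Finset.mem_sdiff.mp hw).1
      have hwne : w ≠ v₁ ∧ w ≠ v₂ := by
        have := (Finset.mem_sdiff.mp hw).2
        simp only [Finset.mem_insert, Finset.mem_singleton] at this
        tauto
      have hadjw : G.Adj u w := by simpa [hNuDef] using hwNu
      have hadj1 : G.Adj u v₁ := by simpa using h₁
      have hadj2 : G.Adj u v₂ := by simpa using h₂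
      have := hG u v₁ v₂ w
      simp only [SimpleGraph.IsClaw, not_and_or] at this
      have hor : G.Adj v₁ w ∨ G.Adj v₂ w := by
        by_contra hcon
        push_neg at hcon
        rcases this with h|h|h|h|h|h|h|h|h <;> tauto
      rcases hor with h | h
      · exact Finset.mem_union_left _ (Finset.mem_inter.mpr ⟨hw, by
          rw [hN1Def, G.mem_neighborFinset]; exact h⟩)
      · exact Finset.mem_union_right _ (Finset.mem_inter.mpr ⟨hw, by
          rw [hN2Def, G.mem_neighborFinset]; exact h⟩)
    have h1 : (Nu \ {v₁, v₂}).card ≤ T1.card + T2.card :=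
      le_trans (Finset.card_le_card hsub) (Finset.card_union_le _ _)
    have h2 : Nu.card ≤ (Nu \ {v₁, v₂}).card + 2 := by
      have := Finset.card_sdiff_add_card_eq_card (Finset.inter_subset_left (s₂ := ({v₁, v₂} : Finset V)) (s₁ := Nu))
      have h3 : (Nu ∩ {v₁, v₂}).card ≤ 2 :=
        le_trans (Finset.card_le_card (Finset.inter_subset_right)) Finset.card_le_two
      have h4 : Nu \ (Nu ∩ {v₁, v₂}) = Nu \ {v₁, v₂} := by
        ext x; simp [Finset.mem_sdiff]
      rw [h4] at this
      omega
    omega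
  -- card of target
  have hcardeq : ((insert u Nu) ∪ (N1 ∩ N2)).card = Nu.card + 1 + S.card := by
    have h1 : (insert u Nu) ∪ (N1 ∩ N2) = (insert u Nu) ∪ S := by
      rw [hSDef, Finset.union_sdiff_self_eq_union]
    have hdisj : Disjoint (insert u Nu) S := by
      apply Finset.disjoint_right.mpr
      intro x hx
      exact (Finset.mem_sdiff.mp hx).2
    rw [h1, Finset.card_union_of_disjoint hdisj, Finset.card_insert_of_notMem huNu]
  have hd1 : N1.card ≤ d := hd ▸ G.degree_le_maxDegree v₁
  have hd2 : N2.card ≤ d := hd ▸ G.degree_le_maxDegree v₂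
  have hdu : Nu.card ≤ d := hd ▸ G.degree_le_maxDegree u
  omega
end

section
/- For integers n ≥ 1 and k ≥ 2, the complex L^k_n = Ind(L^k_n) satisfies the homotopy equivalence L^k_n ≃ ⋁_{1 ≤ i < min{k,n}} susp(L^k_{n−k−i}), where L^k_m = ∅ for m ≤ 0. -/
open SimpleGraph

namespace IW
attribute [local instance] Classical.propDecidable

theorem adjL {N k : ℕ} (a b : Fin N) :
    (lineGraphL N k).Adj a b ↔ (a : ℕ) ≠ b ∧ (a : ℕ) - b < k ∧ (b : ℕ) - a < k := by
  simp only [lineGraphL, SimpleGraph.fromRel_adj, ne_eq, Fin.ext_iff]; omega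


theorem memX_iff {N : ℕ} (G : SimpleGraph (Fin N)) (f : Fin N → ℝ) :
    ((∀ v, 0 ≤ f v) ∧ (∑ᶠ v, f v) = 1 ∧ ∃ s ∈ indepFaces G, {v | f v ≠ 0} = ↑s)
    ↔ ((∀ v, 0 ≤ f v) ∧ (∑ v, f v) = 1 ∧
        ∀ a b, f a ≠ 0 → f b ≠ 0 → ¬ G.Adj a b) := by
  rw [finsum_eq_sum_of_fintype]
  constructor
  · rintro ⟨h0, h1, s, hs, hsupp⟩
    refine ⟨h0, h1, fun a b ha hb => hs a ?_ b ?_⟩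
    · have : a ∈ {v | f v ≠ 0} := ha
      rw [hsupp] at this; exact this
    · have : b ∈ {v | f v ≠ 0} := hb
      rw [hsupp] at this; exact this
  · rintro ⟨h0, h1, hind⟩
    refine ⟨h0, h1, (Set.toFinite {v | f v ≠ 0}).toFinset, ?_, ?_⟩
    · intro a ha b hb
      rw [Set.Finite.mem_toFinset] at ha hb
      exact hind a b ha hb
    · simp

theorem continuous_eval {N : ℕ} (K : Set (Finset (Fin N))) (v : Fin N) :
    Continuous (fun f : realization K => f.1 v) :=
  (continuous_apply v).comp continuous_subtype_val

section Shift
variable (n k : ℕ)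

/-- the inclusion of the small index set as `[k+j, n)`. -/
def liftF (j : ℕ) (a : Fin (n - k - j)) : Fin n := ⟨(a : ℕ) + (k + j), by have := a.2; omega⟩

theorem liftF_inj (j : ℕ) : Function.Injective (liftF n k j) := by
  intro a b h; rw [Fin.ext_iff] at h ⊢; simp only [liftF] at h; omega

def embF (j : ℕ) (x : Fin (n - k - j) → ℝ) : Fin n → ℝ :=
  fun v => if h : k + j ≤ (v : ℕ) then x ⟨(v : ℕ) - (k + j), by have := v.2; omega⟩ else 0

theorem embF_liftF (j : ℕ) (x : Fin (n - k - j) → ℝ) (a : Fin (n - k - j)) :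
    embF n k j x (liftF n k j a) = x a := by
  rw [embF, dif_pos (by simp [liftF])]
  congr 1; rw [Fin.ext_iff]; simp [liftF]

theorem embF_eq_zero (j : ℕ) (x : Fin (n - k - j) → ℝ) (v : Fin n) (hv : (v : ℕ) < k + j) :
    embF n k j x v = 0 := by rw [embF, dif_neg (by omega)]

theorem embF_supp (j : ℕ) (x : Fin (n - k - j) → ℝ) (v : Fin n) (hv : embF n k j x v ≠ 0) :
    ∃ a, v = liftF n k j a ∧ x a ≠ 0 := by
  by_cases h : k + j ≤ (v : ℕ)
  · refine ⟨⟨(v : ℕ) - (k + j), by have := v.2; omega⟩, ?_, ?_⟩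
    · rw [Fin.ext_iff]; simp [liftF]; omega
    · rw [embF, dif_pos h] at hv; exact hv
  · exact absurd (embF_eq_zero n k j x v (by omega)) hv

/-- summation over a function supported on `{j} ∪ [k+j, n)`. -/
theorem sum_supp (j : ℕ) (hjn : j < n) (hjk : j < k) (f : Fin n → ℝ)
    (hs : ∀ v : Fin n, f v ≠ 0 → (v : ℕ) = j ∨ k + j ≤ (v : ℕ)) :
    ∑ v, f v = f ⟨j, hjn⟩ + ∑ a, f (liftF n k j a) := by
  classical
  have himg : ∑ a, f (liftF n k j a)
      = ∑ v ∈ Finset.image (liftF n k j) Finset.univ, f v :=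
    (Finset.sum_image (fun a _ b _ h => liftF_inj n k j h)).symm
  have hins : (⟨j, hjn⟩ : Fin n) ∉ Finset.image (liftF n k j) Finset.univ := by
    simp only [Finset.mem_image, not_exists]
    rintro a ⟨-, ha⟩
    rw [Fin.ext_iff] at ha; simp [liftF] at ha; omega
  rw [himg, ← Finset.sum_insert hins]
  refine (Finset.sum_subset (Finset.subset_univ _) ?_).symm
  intro v _ hv
  by_contra hfv
  rcases hs v hfv with h | h
  · exact hv (Finset.mem_insert.2 (Or.inl (by rw [Fin.ext_iff]; exact h)))
  · refine hv (Finset.mem_insert.2 (Or.inr ?_))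
    refine Finset.mem_image.2 ⟨⟨(v : ℕ) - (k + j), by have := v.2; omega⟩, Finset.mem_univ _, ?_⟩
    rw [Fin.ext_iff]; simp [liftF]; omega

theorem sum_embF (j : ℕ) (hjn : j < n) (hjk : j < k) (x : Fin (n - k - j) → ℝ) :
    ∑ v, embF n k j x v = ∑ a, x a := by
  rw [sum_supp n k j hjn hjk]
  · rw [embF_eq_zero n k j x _ (by simp; omega), zero_add]
    exact Finset.sum_congr rfl fun a _ => embF_liftF n k j x a
  · intro v hv
    rcases embF_supp n k j x v hv with ⟨a, rfl, -⟩
    right; simp [liftF]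

theorem adj_transfer (j : ℕ) (a b : Fin (n - k - j)) :
    (lineGraphL (n - k - j) k).Adj a b ↔ (lineGraphL n k).Adj (liftF n k j a) (liftF n k j b) := by
  rw [adjL, adjL]; simp [liftF]; omega

end Shift

section Main
variable (n k : ℕ)

/-- index type of wedge summands -/
abbrev Idx := {i : ℕ // 1 ≤ i ∧ i < min k n}

abbrev XX := realization (indepFaces (lineGraphL n k))
abbrev Sm (j : Idx n k) := realization (indepFaces (lineGraphL (n - k - j.1) k))

def jfin (j : Idx n k) : Fin n := ⟨j.1, lt_of_lt_of_le j.2.2 (min_le_right k n)⟩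
def zfin (hn : 0 < n) : Fin n := ⟨0, hn⟩

theorem X_nonneg (f : XX n k) : ∀ v, 0 ≤ f.1 v := f.2.1
theorem X_sum (f : XX n k) : ∑ v, f.1 v = 1 := ((memX_iff _ _).1 f.2).2.1
theorem X_indep (f : XX n k) : ∀ a b, f.1 a ≠ 0 → f.1 b ≠ 0 → ¬ (lineGraphL n k).Adj a b :=
  ((memX_iff _ _).1 f.2).2.2
theorem X_le_one (f : XX n k) (v : Fin n) : f.1 v ≤ 1 := by
  have := Finset.single_le_sum (f := fun i => f.1 i)
    (fun i _ => X_nonneg n k f i) (Finset.mem_univ v)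
  rw [X_sum n k f] at this
  exact this

/-- a distance-`≥ k` consequence of independence -/
theorem X_gap (f : XX n k) (a b : Fin n) (ha : f.1 a ≠ 0) (hb : f.1 b ≠ 0)
    (hne : (a : ℕ) ≠ b) : k ≤ (a : ℕ) - b ∨ k ≤ (b : ℕ) - a := by
  have := X_indep n k f a b ha hb
  rw [adjL] at this
  omega

/-- the (closed) star of the vertex `j`. -/
def Cset (j : ℕ) : Set (XX n k) := {f | ∀ v : Fin n, f.1 v ≠ 0 → (v : ℕ) = j ∨ k + j ≤ (v : ℕ)}

theorem isClosed_Cset (j : ℕ) : IsClosed (Cset n k j) := by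
  have : Cset n k j = ⋂ (v : Fin n), ⋂ (_ : ¬((v : ℕ) = j ∨ k + j ≤ (v : ℕ))),
      {f : XX n k | f.1 v = 0} := by
    ext f
    simp only [Cset, Set.mem_setOf_eq, Set.mem_iInter]
    constructor
    · intro h v hv
      by_contra h0
      exact hv (h v h0)
    · intro h v hv
      by_contra h0
      exact hv (h v h0)
  rw [this]
  exact isClosed_iInter fun v => isClosed_iInter fun _ =>
    isClosed_eq (continuous_eval _ v) continuous_const

theorem mem_Cset_of (j : Idx n k) (f : XX n k) (hj : f.1 (jfin n k j) ≠ 0) :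
    f ∈ Cset n k j.1 := by
  intro v hv
  by_cases hne : (v : ℕ) = (jfin n k j : ℕ)
  · left; exact hne
  · rcases X_gap n k f v (jfin n k j) hv hj hne with h | h
    · right; have : (jfin n k j : ℕ) = j.1 := rfl; omega
    · exfalso
      have hj1 : (jfin n k j : ℕ) = j.1 := rfl
      have : j.1 < k := lt_of_lt_of_le j.2.2 (min_le_left k n)
      omega

theorem unique_idx (f : XX n k) (j j' : Idx n k) (h : f.1 (jfin n k j) ≠ 0)
    (h' : f.1 (jfin n k j') ≠ 0) : j = j' := by
  by_contra hne
  have hv : ((jfin n k j : ℕ) ≠ (jfin n k j' : ℕ)) := by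
    simp only [jfin]
    intro hh; exact hne (Subtype.ext hh)
  have := X_gap n k f _ _ h h' hv
  have h1 : (jfin n k j : ℕ) = j.1 := rfl
  have h2 : (jfin n k j' : ℕ) = j'.1 := rfl
  have : j.1 < k := lt_of_lt_of_le j.2.2 (min_le_left k n)
  have : j'.1 < k := lt_of_lt_of_le j'.2.2 (min_le_left k n)
  omega

theorem mem_Cset_zero_of_not (f : XX n k) (h : ¬ ∃ j : Idx n k, f.1 (jfin n k j) ≠ 0) :
    f ∈ Cset n k 0 := by
  push_neg at h
  intro v hv
  by_contra h0
  push_neg at h0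
  have hv1 : 1 ≤ (v : ℕ) := by omega
  have hvk : (v : ℕ) < k := by omega
  have : (v : ℕ) < min k n := lt_min hvk v.2
  have := h ⟨(v : ℕ), hv1, this⟩
  apply hv
  have : jfin n k ⟨(v : ℕ), hv1, by exact lt_min hvk v.2⟩ = v := by
    rw [Fin.ext_iff]; rfl
  rw [← this]
  exact h _

theorem mem_Cset_zero_of_mem (j : Idx n k) (f : XX n k) (hf : f ∈ Cset n k j.1)
    (h0 : f.1 (jfin n k j) = 0) : f ∈ Cset n k 0 := by
  intro v hv
  rcases hf v hv with h | h
  · exfalso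
    apply hv
    have : v = jfin n k j := by rw [Fin.ext_iff]; exact h
    rw [this, h0]
  · right; omega

theorem cover (hn : 0 < n) (hk : 2 ≤ k) (f : XX n k) :
    ∃ j : ℕ, j < min k n ∧ f ∈ Cset n k j := by
  by_cases h : ∃ j : Idx n k, f.1 (jfin n k j) ≠ 0
  · obtain ⟨j, hj⟩ := h
    exact ⟨j.1, j.2.2, mem_Cset_of n k j f hj⟩
  · exact ⟨0, lt_min (by omega) hn, mem_Cset_zero_of_not n k f h⟩

/-- delta function -/
def dl (v w : Fin n) : ℝ := if w = v then 1 else 0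

theorem dl_self (v : Fin n) : dl n v v = 1 := if_pos rfl
theorem dl_ne {v w : Fin n} (h : w ≠ v) : dl n v w = 0 := if_neg h
theorem dl_nonneg (v w : Fin n) : 0 ≤ dl n v w := by
  rw [dl]; split <;> norm_num
theorem sum_dl (v : Fin n) : ∑ w, dl n v w = 1 := by
  rw [show (fun w => dl n v w) = fun w => if w = v then (1:ℝ) else 0 from rfl]
  simp [Finset.sum_ite_eq']

/-- delta as a member of the realization -/
def dlX (v : Fin n) : XX n k :=
  ⟨dl n v, (memX_iff _ _).2 ⟨dl_nonneg n v, sum_dl n v, by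
    intro a b ha hb
    have ha' : a = v := by by_contra h; exact ha (dl_ne n h)
    have hb' : b = v := by by_contra h; exact hb (dl_ne n h)
    subst ha'; subst hb'
    exact fun h => (lineGraphL n k).irrefl h⟩⟩

theorem eq_dl_of_one (f : XX n k) (v : Fin n) (h : f.1 v = 1) : f.1 = dl n v := by
  funext w
  by_cases hw : w = v
  · subst hw; rw [h, dl_self]
  · rw [dl_ne n hw]
    have hsum := X_sum n k f
    have : ∑ w ∈ Finset.univ.erase v, f.1 w = 0 := by
      rw [← Finset.add_sum_erase _ _ (Finset.mem_univ v)] at hsum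
      linarith
    have := (Finset.sum_eq_zero_iff_of_nonneg
      (fun i _ => X_nonneg n k f i)).1 this
    exact this w (Finset.mem_erase.2 ⟨hw, Finset.mem_univ w⟩)

end Main

-- ### part 4 : susp/wedge helpers
section SW
variable (n k : ℕ)

abbrev SuspPt (j : Idx n k) := (Sm n k j) × unitInterval ⊕ Bool

def smk (j : Idx n k) (p : SuspPt n k j) : Susp (Sm n k j) := Quot.mk _ p

abbrev WW := Wedge (fun i : Idx n k => Susp (Sm n k i)) (fun _ => Susp.north _)

def wmk (j : Idx n k) (z : Susp (Sm n k j)) : WW n k := Quot.mk _ (Sum.inl ⟨j, z⟩)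

def wbase : WW n k := Quot.mk _ (Sum.inr ())

theorem smk_bot (j : Idx n k) (x : Sm n k j) :
    smk n k j (Sum.inl (x, 0)) = smk n k j (Sum.inr false) :=
  Quot.sound (Or.inl ⟨x, rfl, rfl⟩)

theorem smk_top (j : Idx n k) (x : Sm n k j) :
    smk n k j (Sum.inl (x, 1)) = smk n k j (Sum.inr true) :=
  Quot.sound (Or.inr ⟨x, rfl, rfl⟩)

theorem smk_north (j : Idx n k) : smk n k j (Sum.inr true) = Susp.north _ := rfl

theorem wmk_north (j : Idx n k) : wmk n k j (Susp.north _) = wbase n k :=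
  Quot.sound ⟨j, rfl, rfl⟩

theorem continuous_smk (j : Idx n k) : Continuous (smk n k j) := continuous_quot_mk

theorem continuous_wmk (j : Idx n k) : Continuous (wmk n k j) :=
  continuous_quot_mk.comp (continuous_inl.comp continuous_sigmaMk)

theorem smk_inl_one (j : Idx n k) (x : Sm n k j) (s : unitInterval) (hs : (s : ℝ) = 1) :
    smk n k j (Sum.inl (x, s)) = smk n k j (Sum.inr true) := by
  have : s = 1 := Subtype.ext hs
  rw [this]
  exact smk_top n k j x

theorem smk_inl_zero (j : Idx n k) (x : Sm n k j) (s : unitInterval) (hs : (s : ℝ) = 0) :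
    smk n k j (Sum.inl (x, s)) = smk n k j (Sum.inr false) := by
  have : s = 0 := Subtype.ext hs
  rw [this]
  exact smk_bot n k j x

/-- total representing space of the wedge -/
abbrev PP := (Σ j : Idx n k, SuspPt n k j) ⊕ Unit

def Qmap : PP n k → WW n k :=
  Sum.elim (fun q => wmk n k q.1 (smk n k q.1 q.2)) (fun _ => wbase n k)

theorem continuous_Qmap : Continuous (Qmap n k) := by
  refine Continuous.sumElim ?_ continuous_const
  refine continuous_sigma fun j => ?_
  exact (continuous_wmk n k j).comp (continuous_smk n k j)

theorem surjective_Qmap : Function.Surjective (Qmap n k) := by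
  intro w
  obtain ⟨a, rfl⟩ := Quot.exists_rep w
  rcases a with ⟨j, z⟩ | u
  · obtain ⟨p, rfl⟩ := Quot.exists_rep z
    exact ⟨Sum.inl ⟨j, p⟩, rfl⟩
  · exact ⟨Sum.inr (), rfl⟩

theorem isQuotientMap_Qmap : Topology.IsQuotientMap (Qmap n k) := by
  rw [Topology.isQuotientMap_iff, Topology.isCoinducing_iff, and_comm]
  refine ⟨surjective_Qmap n k, fun s => Iff.symm ?_⟩
  have h2 : ∀ j : Idx n k,
      IsOpen ({z : Susp (Sm n k j) |
        Quot.mk (WedgeRel (fun i : Idx n k => Susp (Sm n k i)) (fun _ => Susp.north _))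
          (Sum.inl ⟨j, z⟩) ∈ s})
      ↔ IsOpen (Quot.mk (SuspRel (Sm n k j)) ⁻¹' {z : Susp (Sm n k j) |
        Quot.mk (WedgeRel (fun i : Idx n k => Susp (Sm n k i)) (fun _ => Susp.north _))
          (Sum.inl ⟨j, z⟩) ∈ s}) :=
    fun j => (Topology.IsCoinducing.isOpen_preimage (Topology.IsQuotientMap.isCoinducing isQuotientMap_quot_mk)).symm
  erw [← Topology.IsCoinducing.isOpen_preimage (Topology.IsQuotientMap.isCoinducing isQuotientMap_quot_mk), isOpen_sum_iff,
    isOpen_sigma_iff]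
  constructor
  · rintro ⟨hl, -⟩
    rw [isOpen_sum_iff]
    refine ⟨?_, isOpen_discrete _⟩
    rw [isOpen_sigma_iff]
    intro j
    exact (h2 j).1 (hl j)
  · intro h
    rw [isOpen_sum_iff] at h
    obtain ⟨hl, -⟩ := h
    rw [isOpen_sigma_iff] at hl
    exact ⟨fun j => (h2 j).2 (hl j), isOpen_discrete _⟩

/-- compactness of realizations of independence complexes -/
theorem compactSpace_real {N : ℕ} (G : SimpleGraph (Fin N)) :
    CompactSpace (realization (indepFaces G)) := by
  have hset : {f : Fin N → ℝ | (∀ v, 0 ≤ f v) ∧ (∑ᶠ v, f v) = 1 ∧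
      ∃ s ∈ indepFaces G, {v | f v ≠ 0} = ↑s}
      = {f : Fin N → ℝ | ∀ v, 0 ≤ f v} ∩ {f | ∑ v, f v = 1}
        ∩ ⋂ (a) (b) (_ : G.Adj a b), ({f : Fin N → ℝ | f a = 0} ∪ {f | f b = 0}) := by
    ext f
    rw [Set.mem_setOf_eq, memX_iff]
    simp only [Set.mem_inter_iff, Set.mem_setOf_eq, Set.mem_iInter, Set.mem_union]
    constructor
    · rintro ⟨h0, h1, h2⟩
      refine ⟨⟨h0, h1⟩, fun a b hab => ?_⟩
      by_contra hc
      push_neg at hc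
      exact h2 a b hc.1 hc.2 hab
    · rintro ⟨⟨h0, h1⟩, h2⟩
      refine ⟨h0, h1, fun a b ha hb hab => ?_⟩
      rcases h2 a b hab with h | h
      · exact ha h
      · exact hb h
  have hclosed : IsClosed {f : Fin N → ℝ | (∀ v, 0 ≤ f v) ∧ (∑ᶠ v, f v) = 1 ∧
      ∃ s ∈ indepFaces G, {v | f v ≠ 0} = ↑s} := by
    rw [hset]
    refine IsClosed.inter (IsClosed.inter ?_ ?_) ?_
    · have : {f : Fin N → ℝ | ∀ v, 0 ≤ f v} = ⋂ v, {f : Fin N → ℝ | 0 ≤ f v} := by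
        ext f; simp
      rw [this]
      exact isClosed_iInter fun v => isClosed_le continuous_const (continuous_apply v)
    · exact isClosed_eq (continuous_finset_sum _ fun v _ => continuous_apply v) continuous_const
    · exact isClosed_iInter fun a => isClosed_iInter fun b => isClosed_iInter fun _ =>
        IsClosed.union (isClosed_eq (continuous_apply a) continuous_const)
          (isClosed_eq (continuous_apply b) continuous_const)
  have hcomp : IsCompact {f : Fin N → ℝ | (∀ v, 0 ≤ f v) ∧ (∑ᶠ v, f v) = 1 ∧
      ∃ s ∈ indepFaces G, {v | f v ≠ 0} = ↑s} := by
    refine IsCompact.of_isClosed_subset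
      (isCompact_univ_pi fun _ => isCompact_Icc (a := (0:ℝ)) (b := 1)) hclosed ?_
    rintro f ⟨h0, h1, -⟩
    intro v _
    refine ⟨h0 v, ?_⟩
    have hle := Finset.single_le_sum (f := fun i => f i) (fun i _ => h0 i) (Finset.mem_univ v)
    rw [finsum_eq_sum_of_fintype] at h1
    rw [h1] at hle
    exact hle
  exact isCompact_iff_compactSpace.mp hcomp

end SW

-- ### part 5 : the map psi
section Psi
variable (n k : ℕ)

theorem R_nonneg {N : ℕ} {G : SimpleGraph (Fin N)} (f : realization (indepFaces G)) :
    ∀ v, 0 ≤ f.1 v := f.2.1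
theorem R_sum {N : ℕ} {G : SimpleGraph (Fin N)} (f : realization (indepFaces G)) :
    ∑ v, f.1 v = 1 := ((memX_iff _ _).1 f.2).2.1
theorem R_indep {N : ℕ} {G : SimpleGraph (Fin N)} (f : realization (indepFaces G)) :
    ∀ a b, f.1 a ≠ 0 → f.1 b ≠ 0 → ¬ G.Adj a b := ((memX_iff _ _).1 f.2).2.2

/-- membership of a combination `p • emb x + q • δ_w` -/
theorem mem_combo (j : Idx n k) (x : Sm n k j) (p q : ℝ) (hp : 0 ≤ p) (hq : 0 ≤ q)
    (hpq : p + q = 1) (w : Fin n) (hw : (w : ℕ) ≤ j.1) :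
    (∀ v, 0 ≤ (fun v => p * embF n k j.1 x.1 v + q * dl n w v) v) ∧
      (∑ᶠ v, (fun v => p * embF n k j.1 x.1 v + q * dl n w v) v) = 1 ∧
      ∃ s ∈ indepFaces (lineGraphL n k),
        {v | (fun v => p * embF n k j.1 x.1 v + q * dl n w v) v ≠ 0} = ↑s := by
  have hjk : j.1 < k := lt_of_lt_of_le j.2.2 (min_le_left k n)
  have hjn : j.1 < n := lt_of_lt_of_le j.2.2 (min_le_right k n)
  have hemb0 : ∀ a', 0 ≤ x.1 a' := R_nonneg x
  have hembnn : ∀ v, 0 ≤ embF n k j.1 x.1 v := by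
    intro v
    by_cases h : k + j.1 ≤ (v : ℕ)
    · rw [embF, dif_pos h]; exact hemb0 _
    · rw [embF, dif_neg h]
  refine (memX_iff _ _).2 ⟨?_, ?_, ?_⟩
  · intro v
    exact add_nonneg (mul_nonneg hp (hembnn v)) (mul_nonneg hq (dl_nonneg n w v))
  · rw [Finset.sum_add_distrib, ← Finset.mul_sum, ← Finset.mul_sum,
      sum_embF n k j.1 hjn hjk, R_sum x, sum_dl]
    linarith
  · intro a b ha hb hadj
    rw [adjL] at hadj
    obtain ⟨hne, hd1, hd2⟩ := hadj
    have key : ∀ c : Fin n, p * embF n k j.1 x.1 c + q * dl n w c ≠ 0 →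
        (c = w ∨ ∃ a', c = liftF n k j.1 a' ∧ x.1 a' ≠ 0) := by
      intro c hc
      by_cases hcw : c = w
      · exact Or.inl hcw
      · right
        rw [dl_ne n hcw, mul_zero, add_zero] at hc
        have : embF n k j.1 x.1 c ≠ 0 := by
          intro h0; rw [h0, mul_zero] at hc; exact hc rfl
        exact embF_supp n k j.1 x.1 c this
    rcases key a ha with rfl | ⟨a', rfl, ha'⟩
    · rcases key b hb with rfl | ⟨b', rfl, hb'⟩
      · exact hne rfl
      · have : (liftF n k j.1 b' : ℕ) = (b' : ℕ) + (k + j.1) := rfl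
        omega
    · rcases key b hb with rfl | ⟨b', rfl, hb'⟩
      · have : (liftF n k j.1 a' : ℕ) = (a' : ℕ) + (k + j.1) := rfl
        omega
      · refine R_indep x a' b' ha' hb' ?_
        rw [adj_transfer n k j.1, adjL]
        have h1 : (liftF n k j.1 a' : ℕ) = (a' : ℕ) + (k + j.1) := rfl
        have h2 : (liftF n k j.1 b' : ℕ) = (b' : ℕ) + (k + j.1) := rfl
        omega

/-- the two cone pieces of psi on a summand -/
noncomputable def branchS (hn : 0 < n) (j : Idx n k) (q : Sm n k j × unitInterval) : XX n k :=
  ⟨fun v => min (2*(q.2:ℝ)) 1 * embF n k j.1 q.1.1 v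
      + (1 - min (2*(q.2:ℝ)) 1) * dl n (jfin n k j) v,
    mem_combo n k j q.1 _ _ (le_min (by have := q.2.2.1; linarith) zero_le_one)
      (by have : min (2*(q.2:ℝ)) 1 ≤ 1 := min_le_right _ _; linarith)
      (by ring) _ (le_refl _)⟩

noncomputable def branchN (hn : 0 < n) (j : Idx n k) (q : Sm n k j × unitInterval) : XX n k :=
  ⟨fun v => min (2 - 2*(q.2:ℝ)) 1 * embF n k j.1 q.1.1 v
      + (1 - min (2 - 2*(q.2:ℝ)) 1) * dl n (zfin n hn) v,
    mem_combo n k j q.1 _ _ (le_min (by have := q.2.2.2; linarith) zero_le_one)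
      (by have : min (2 - 2*(q.2:ℝ)) 1 ≤ 1 := min_le_right _ _; linarith)
      (by ring) _ (by simp [zfin])⟩

noncomputable def psiP (hn : 0 < n) (j : Idx n k) : SuspPt n k j → XX n k :=
  Sum.elim
    (fun q => if (q.2 : ℝ) ≤ 1/2 then branchS n k hn j q else branchN n k hn j q)
    (fun b => if b then dlX n k (zfin n hn) else dlX n k (jfin n k j))

theorem continuous_psiP (hn : 0 < n) (j : Idx n k) : Continuous (psiP n k hn j) := by
  refine Continuous.sumElim ?_ (continuous_of_discreteTopology)
  have hs : Continuous fun q : Sm n k j × unitInterval => (q.2 : ℝ) :=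
    continuous_subtype_val.comp continuous_snd
  have hemb : ∀ v, Continuous fun q : Sm n k j × unitInterval => embF n k j.1 q.1.1 v := by
    intro v
    unfold embF
    by_cases h : k + j.1 ≤ (v : ℕ)
    · simp only [dif_pos h]
      exact (continuous_apply _).comp (continuous_subtype_val.comp continuous_fst)
    · simp only [dif_neg h]
      exact continuous_const
  have hbS : Continuous (branchS n k hn j) := by
    refine Continuous.subtype_mk ?_ _
    refine continuous_pi fun v => ?_
    exact ((continuous_const.mul hs).min continuous_const).mul (hemb v) |>.add
      ((continuous_const.sub ((continuous_const.mul hs).min continuous_const)).mul continuous_const)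
  have hbN : Continuous (branchN n k hn j) := by
    refine Continuous.subtype_mk ?_ _
    refine continuous_pi fun v => ?_
    exact ((continuous_const.sub (continuous_const.mul hs)).min continuous_const).mul (hemb v) |>.add
      ((continuous_const.sub (((continuous_const.sub (continuous_const.mul hs))).min
        continuous_const)).mul continuous_const)
  refine Continuous.if_le hbS hbN hs continuous_const ?_
  intro q hq
  apply Subtype.ext
  funext v
  show min (2*(q.2:ℝ)) 1 * _ + (1 - min (2*(q.2:ℝ)) 1) * _
      = min (2 - 2*(q.2:ℝ)) 1 * _ + (1 - min (2 - 2*(q.2:ℝ)) 1) * _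
  rw [hq]
  norm_num

theorem psiP_respects (hn : 0 < n) (j : Idx n k) (a b : SuspPt n k j)
    (hab : SuspRel (Sm n k j) a b) : psiP n k hn j a = psiP n k hn j b := by
  rcases hab with ⟨x, rfl, rfl⟩ | ⟨x, rfl, rfl⟩
  · show (if ((0 : unitInterval) : ℝ) ≤ 1/2 then _ else _) = dlX n k (jfin n k j)
    rw [if_pos (by norm_num)]
    apply Subtype.ext
    funext v
    show min (2*((0 : unitInterval):ℝ)) 1 * embF n k j.1 x.1 v
        + (1 - min (2*((0 : unitInterval):ℝ)) 1) * dl n (jfin n k j) v = dl n (jfin n k j) v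
    norm_num
  · show (if ((1 : unitInterval) : ℝ) ≤ 1/2 then _ else _) = dlX n k (zfin n hn)
    rw [if_neg (by norm_num)]
    apply Subtype.ext
    funext v
    show min (2 - 2*((1 : unitInterval):ℝ)) 1 * embF n k j.1 x.1 v
        + (1 - min (2 - 2*((1 : unitInterval):ℝ)) 1) * dl n (zfin n hn) v = dl n (zfin n hn) v
    norm_num

noncomputable def psiS (hn : 0 < n) (j : Idx n k) : Susp (Sm n k j) → XX n k :=
  Quot.lift (psiP n k hn j) (psiP_respects n k hn j)

theorem continuous_psiS (hn : 0 < n) (j : Idx n k) : Continuous (psiS n k hn j) :=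
  continuous_quot_lift _ (continuous_psiP n k hn j)

noncomputable def psiW (hn : 0 < n) : WW n k → XX n k :=
  Quot.lift (Sum.elim (fun q => psiS n k hn q.1 q.2) (fun _ => dlX n k (zfin n hn)))
    (by rintro a b ⟨i, rfl, rfl⟩; rfl)

theorem continuous_psiW (hn : 0 < n) : Continuous (psiW n k hn) := by
  refine continuous_quot_lift _ ?_
  refine Continuous.sumElim ?_ continuous_const
  exact continuous_sigma fun j => continuous_psiS n k hn j

end Psi

-- ### part 6 : the map phi
section Phi
variable (n k : ℕ)

noncomputable def resXraw (j : Idx n k) (f : XX n k) : Fin (n - k - j.1) → ℝ :=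
  fun a => f.1 (liftF n k j.1 a) / (1 - f.1 (jfin n k j))

theorem tail_sum (j : Idx n k) (f : XX n k) (hf : f ∈ Cset n k j.1) :
    ∑ a, f.1 (liftF n k j.1 a) = 1 - f.1 (jfin n k j) := by
  have hjk : j.1 < k := lt_of_lt_of_le j.2.2 (min_le_left k n)
  have hjn : j.1 < n := lt_of_lt_of_le j.2.2 (min_le_right k n)
  have := sum_supp n k j.1 hjn hjk f.1 (fun v hv => hf v hv)
  rw [X_sum n k f] at this
  have hj : (⟨j.1, hjn⟩ : Fin n) = jfin n k j := rfl
  rw [hj] at this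
  linarith

theorem mem_resX (j : Idx n k) (f : XX n k) (hf : f ∈ Cset n k j.1)
    (h1 : f.1 (jfin n k j) ≠ 1) :
    (∀ a, 0 ≤ resXraw n k j f a) ∧ (∑ᶠ a, resXraw n k j f a) = 1 ∧
      ∃ s ∈ indepFaces (lineGraphL (n - k - j.1) k), {a | resXraw n k j f a ≠ 0} = ↑s := by
  have ht1 : f.1 (jfin n k j) < 1 := lt_of_le_of_ne (X_le_one n k f _) h1
  have hpos : 0 < 1 - f.1 (jfin n k j) := by linarith
  refine (memX_iff _ _).2 ⟨?_, ?_, ?_⟩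
  · intro a
    exact div_nonneg (X_nonneg n k f _) (le_of_lt hpos)
  · show (∑ a, f.1 (liftF n k j.1 a) / (1 - f.1 (jfin n k j))) = 1
    rw [← Finset.sum_div, tail_sum n k j f hf, div_self (ne_of_gt hpos)]
  · intro a b ha hb hadj
    have ha' : f.1 (liftF n k j.1 a) ≠ 0 := by
      intro h
      exact ha (by show f.1 (liftF n k j.1 a) / _ = 0; rw [h, zero_div])
    have hb' : f.1 (liftF n k j.1 b) ≠ 0 := by
      intro h
      exact hb (by show f.1 (liftF n k j.1 b) / _ = 0; rw [h, zero_div])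
    exact X_indep n k f _ _ ha' hb' ((adj_transfer n k j.1 a b).1 hadj)

noncomputable def phiC (j : Idx n k) (f : XX n k) (hf : f ∈ Cset n k j.1) :
    Susp (Sm n k j) :=
  if h1 : f.1 (jfin n k j) = 1 then smk n k j (Sum.inr false)
  else smk n k j (Sum.inl (⟨resXraw n k j f, mem_resX n k j f hf h1⟩,
    ⟨1 - f.1 (jfin n k j), by
      constructor
      · have := X_le_one n k f (jfin n k j); linarith
      · have := X_nonneg n k f (jfin n k j); linarith⟩))

noncomputable def phi (f : XX n k) : WW n k :=
  if h : ∃ j : Idx n k, f.1 (jfin n k j) ≠ 0 then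
    wmk n k h.choose (phiC n k h.choose f (mem_Cset_of n k h.choose f h.choose_spec))
  else wbase n k

theorem phi_spec (j : Idx n k) (f : XX n k) (hj : f.1 (jfin n k j) ≠ 0)
    (hf : f ∈ Cset n k j.1) : phi n k f = wmk n k j (phiC n k j f hf) := by
  have hex : ∃ j : Idx n k, f.1 (jfin n k j) ≠ 0 := ⟨j, hj⟩
  rw [phi, dif_pos hex]
  have hcj : hex.choose = j := unique_idx n k f _ j hex.choose_spec hj
  subst hcj
  rfl

theorem Cset0_vanish (f : XX n k) (hf : f ∈ Cset n k 0) (j : Idx n k) :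
    f.1 (jfin n k j) = 0 := by
  by_contra h
  rcases hf _ h with h0 | h0
  · have : (jfin n k j : ℕ) = j.1 := rfl
    omega
  · have : (jfin n k j : ℕ) = j.1 := rfl
    have : j.1 < k := lt_of_lt_of_le j.2.2 (min_le_left k n)
    omega

theorem phi_of_Cset0 (f : XX n k) (hf : f ∈ Cset n k 0) : phi n k f = wbase n k := by
  rw [phi, dif_neg]
  push_neg
  intro j
  exact Cset0_vanish n k f hf j

/-- phi on the cone `C_j`, as a function on the subtype. -/
noncomputable def gfun (j : Idx n k) (f : ↥(Cset n k j.1)) : WW n k :=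
  wmk n k j (phiC n k j f.1 f.2)

theorem phi_eq_gfun (j : Idx n k) (f : ↥(Cset n k j.1)) : phi n k f.1 = gfun n k j f := by
  by_cases hj : f.1.1 (jfin n k j) ≠ 0
  · exact phi_spec n k j f.1 hj f.2
  · push_neg at hj
    erw [phi_of_Cset0 n k f.1 (mem_Cset_zero_of_mem n k j f.1 f.2 hj), gfun, phiC,
      dif_neg (show ¬ f.1.1 (jfin n k j) = 1 by rw [hj]; norm_num),
      smk_inl_one n k j _ _ (by show 1 - f.1.1 (jfin n k j) = 1; rw [hj]; ring),
      smk_north, wmk_north]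

theorem continuous_gfun (j : Idx n k) : Continuous (gfun n k j) := by
  rw [continuous_iff_continuousAt]
  intro f₀
  by_cases hap : f₀.1.1 (jfin n k j) = 1
  · -- continuity at the apex via compactness of the small complex
    intro V hV
    rw [Filter.mem_map]
    have hgf : gfun n k j f₀ = wmk n k j (smk n k j (Sum.inr false)) := by
      rw [gfun, phiC, dif_pos hap]
    rw [hgf] at hV
    rcases mem_nhds_iff.1 hV with ⟨O, hOV, hO, hmemO⟩
    set q : SuspPt n k j → WW n k := fun p => wmk n k j (smk n k j p) with hq
    have hqc : Continuous q := (continuous_wmk n k j).comp (continuous_smk n k j)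
    have hU : IsOpen (q ⁻¹' O) := hO.preimage hqc
    have hfalse : Sum.inr false ∈ q ⁻¹' O := hmemO
    have hzero : ∀ x : Sm n k j, (Sum.inl (x, 0) : SuspPt n k j) ∈ q ⁻¹' O := by
      intro x
      show q (Sum.inl (x, 0)) ∈ O
      have : q (Sum.inl (x, 0)) = q (Sum.inr false) := congrArg (wmk n k j) (smk_bot n k j x)
      rw [this]; exact hmemO
    -- tube lemma
    have : CompactSpace (Sm n k j) := compactSpace_real _
    set A : Set unitInterval :=
      Prod.snd '' ((Sum.inl ⁻¹' (q ⁻¹' O) : Set (Sm n k j × unitInterval))ᶜ) with hA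
    have hAclosed : IsClosed A := by
      refine (IsCompact.image ?_ continuous_snd).isClosed
      exact (hU.preimage continuous_inl).isClosed_compl.isCompact
    have h0A : (0 : unitInterval) ∉ A := by
      rintro ⟨⟨x, s⟩, hxs, hs⟩
      exact hxs (by rw [show s = 0 from hs]; exact hzero x)
    rcases Metric.isOpen_iff.1 hAclosed.isOpen_compl 0 h0A with ⟨ε, hε, hball⟩
    have hkey : ∀ x : Sm n k j, ∀ s : unitInterval, (s : ℝ) < ε →
        (Sum.inl (x, s) : SuspPt n k j) ∈ q ⁻¹' O := by
      intro x s hs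
      by_contra hc
      have : s ∈ A := ⟨(x, s), hc, rfl⟩
      refine absurd this ?_
      have : s ∈ Metric.ball (0 : unitInterval) ε := by
        rw [Metric.mem_ball, Subtype.dist_eq, Real.dist_eq]
        have h0 : ((0 : unitInterval) : ℝ) = 0 := rfl
        rw [h0, sub_zero, abs_of_nonneg s.2.1]
        exact hs
      exact fun hA' => (hball this) hA'
    -- the neighborhood
    set N : Set ↥(Cset n k j.1) := {f | 1 - ε < f.1.1 (jfin n k j)} with hN
    have hNopen : IsOpen N := by
      have : Continuous fun f : ↥(Cset n k j.1) => f.1.1 (jfin n k j) :=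
        (continuous_eval _ _).comp continuous_subtype_val
      exact isOpen_lt continuous_const this
    have hf₀N : f₀ ∈ N := by
      show 1 - ε < f₀.1.1 (jfin n k j)
      rw [hap]; linarith
    refine Filter.mem_of_superset (hNopen.mem_nhds hf₀N) ?_
    intro f hf
    show gfun n k j f ∈ V
    rw [gfun, phiC]
    by_cases h1 : f.1.1 (jfin n k j) = 1
    · rw [dif_pos h1]; exact hOV hmemO
    · rw [dif_neg h1]
      refine hOV ?_
      refine hkey _ _ ?_
      show 1 - f.1.1 (jfin n k j) < ε
      have : 1 - ε < f.1.1 (jfin n k j) := hf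
      linarith
  · -- continuity away from the apex
    set Vo : Set ↥(Cset n k j.1) := {f | f.1.1 (jfin n k j) < 1} with hVo
    have hVoOpen : IsOpen Vo := by
      have : Continuous fun f : ↥(Cset n k j.1) => f.1.1 (jfin n k j) :=
        (continuous_eval _ _).comp continuous_subtype_val
      exact isOpen_lt this continuous_const
    have hf₀Vo : f₀ ∈ Vo :=
      lt_of_le_of_ne (X_le_one n k f₀.1 _) hap
    have hcont : ContinuousOn (gfun n k j) Vo := by
      rw [continuousOn_iff_continuous_restrict]
      have heq : Vo.domRestrict (gfun n k j) = fun p : ↥Vo =>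
          wmk n k j (smk n k j (Sum.inl
            (⟨resXraw n k j p.1.1, mem_resX n k j p.1.1 p.1.2 (ne_of_lt p.2)⟩,
             ⟨1 - p.1.1.1 (jfin n k j), by
                constructor
                · have := X_le_one n k p.1.1 (jfin n k j); linarith
                · have := X_nonneg n k p.1.1 (jfin n k j); linarith⟩))) := by
        funext p
        show gfun n k j p.1 = _
        rw [gfun, phiC, dif_neg (ne_of_lt p.2)]
      rw [heq]
      have hpair : Continuous (fun p : ↥Vo =>
          ((⟨resXraw n k j p.1.1, mem_resX n k j p.1.1 p.1.2 (ne_of_lt p.2)⟩,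
             ⟨1 - p.1.1.1 (jfin n k j), by
                constructor
                · have := X_le_one n k p.1.1 (jfin n k j); linarith
                · have := X_nonneg n k p.1.1 (jfin n k j); linarith⟩) :
            Sm n k j × unitInterval)) := by
        refine Continuous.prodMk ?_ ?_
        · refine Continuous.subtype_mk ?_ _
          refine continuous_pi fun a => ?_
          refine Continuous.div ?_ ?_ ?_
          · exact (continuous_eval _ _).comp
              (continuous_subtype_val.comp continuous_subtype_val)
          · exact continuous_const.sub ((continuous_eval _ _).comp
              (continuous_subtype_val.comp continuous_subtype_val))
          · intro p
            have hlt : p.1.1.1 (jfin n k j) < 1 := p.2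
            intro hc
            have : (1 : ℝ) - p.1.1.1 (jfin n k j) = 0 := hc
            linarith
        · refine Continuous.subtype_mk ?_ _
          exact continuous_const.sub ((continuous_eval _ _).comp
            (continuous_subtype_val.comp continuous_subtype_val))
      exact ((continuous_wmk n k j).comp (continuous_smk n k j)).comp
        (continuous_inl.comp hpair)
    exact (hcont.continuousWithinAt hf₀Vo).continuousAt (hVoOpen.mem_nhds hf₀Vo)

theorem continuousOn_phi_Cset (j : Idx n k) : ContinuousOn (phi n k) (Cset n k j.1) := by
  rw [continuousOn_iff_continuous_restrict]
  have : (Cset n k j.1).domRestrict (phi n k) = gfun n k j := by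
    funext f
    exact phi_eq_gfun n k j f
  rw [this]
  exact continuous_gfun n k j

theorem continuous_phi (hn : 0 < n) (hk : 2 ≤ k) : Continuous (phi n k) := by
  have hcover : ⋃ j : Fin (min k n), Cset n k j.1 = Set.univ := by
    rw [Set.eq_univ_iff_forall]
    intro f
    rcases cover n k hn hk f with ⟨j, hj, hmem⟩
    exact Set.mem_iUnion.2 ⟨⟨j, hj⟩, hmem⟩
  refine LocallyFinite.continuous ?_ hcover (fun j => isClosed_Cset n k j.1) ?_
  · exact locallyFinite_of_finite _
  · intro j
    by_cases h0 : j.1 = 0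
    · rw [h0]
      refine ContinuousOn.congr (continuousOn_const (c := wbase n k)) ?_
      intro f hf
      exact phi_of_Cset0 n k f hf
    · have h1 : 1 ≤ j.1 := Nat.one_le_iff_ne_zero.2 h0
      exact continuousOn_phi_Cset n k ⟨j.1, h1, j.2⟩

end Phi

-- ### part 7 : homotopy on the wedge
section KHom
variable (n k : ℕ)

noncomputable def sigI (u s : unitInterval) : unitInterval :=
  ⟨(1 - (u:ℝ)) * min (2*(s:ℝ)) 1 + (u:ℝ) * (s:ℝ), by
    have hu0 := u.2.1; have hu1 := u.2.2; have hs0 := s.2.1; have hs1 := s.2.2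
    have hm0 : 0 ≤ min (2*(s:ℝ)) 1 := le_min (by linarith) zero_le_one
    have hm1 : min (2*(s:ℝ)) 1 ≤ 1 := min_le_right _ _
    constructor
    · have : 0 ≤ (1 - (u:ℝ)) * min (2*(s:ℝ)) 1 := mul_nonneg (by linarith) hm0
      nlinarith
    · nlinarith [mul_le_mul_of_nonneg_left hm1 (show (0:ℝ) ≤ 1 - u by linarith),
        mul_le_mul_of_nonneg_left hs1 hu0]⟩

noncomputable def KS (u : unitInterval) (j : Idx n k) : SuspPt n k j → WW n k :=
  Sum.elim (fun q => wmk n k j (smk n k j (Sum.inl (q.1, sigI u q.2))))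
    (fun b => if b then wbase n k else wmk n k j (smk n k j (Sum.inr false)))

theorem KS_respects (u : unitInterval) (j : Idx n k) (a b : SuspPt n k j)
    (hab : SuspRel (Sm n k j) a b) : KS n k u j a = KS n k u j b := by
  rcases hab with ⟨x, rfl, rfl⟩ | ⟨x, rfl, rfl⟩
  · have h0 : ((sigI u 0 : unitInterval) : ℝ) = 0 := by
      show (1 - (u:ℝ)) * min (2*((0:unitInterval):ℝ)) 1 + (u:ℝ) * ((0:unitInterval):ℝ) = 0
      norm_num
    show wmk n k j (smk n k j (Sum.inl (x, sigI u 0))) = _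
    rw [smk_inl_zero n k j x _ h0]
    rfl
  · have h1 : ((sigI u 1 : unitInterval) : ℝ) = 1 := by
      show (1 - (u:ℝ)) * min (2*((1:unitInterval):ℝ)) 1 + (u:ℝ) * ((1:unitInterval):ℝ) = 1
      norm_num
    show wmk n k j (smk n k j (Sum.inl (x, sigI u 1))) = _
    rw [smk_inl_one n k j x _ h1, smk_north, wmk_north]
    rfl

noncomputable def Kq (u : unitInterval) : WW n k → WW n k :=
  Quot.lift
    (Sum.elim (fun p : Σ j : Idx n k, Susp (Sm n k j) =>
        Quot.lift (KS n k u p.1) (KS_respects n k u p.1) p.2)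
      (fun _ => wbase n k))
    (by rintro a b ⟨i, rfl, rfl⟩; rfl)

noncomputable def Kmap : unitInterval × WW n k → WW n k := fun p => Kq n k p.1 p.2

theorem continuous_Kmap : Continuous (Kmap n k) := by
  refine Topology.IsQuotientMap.continuous_lift_prod_right (isQuotientMap_Qmap n k) ?_
  -- continuity of the representative-level map
  have hswap : Continuous fun p : PP n k × unitInterval => Kmap n k (p.2, Qmap n k p.1) := by
    have e1 : Continuous fun p : (Σ j : Idx n k, SuspPt n k j) × unitInterval ⊕ Unit × unitInterval =>
        Sum.elim
          (fun q : (Σ j : Idx n k, SuspPt n k j) × unitInterval =>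
            Kmap n k (q.2, Qmap n k (Sum.inl q.1)))
          (fun _ : Unit × unitInterval => wbase n k) p := by
      refine Continuous.sumElim ?_ continuous_const
      have e2 : Continuous fun q : Σ j : Idx n k, SuspPt n k j × unitInterval =>
          Kmap n k (q.2.2, Qmap n k (Sum.inl ⟨q.1, q.2.1⟩)) := by
        refine continuous_sigma fun j => ?_
        have e3 : Continuous fun z : (Sm n k j × unitInterval) × unitInterval ⊕ Bool × unitInterval =>
            Sum.elim
              (fun q : (Sm n k j × unitInterval) × unitInterval =>
                wmk n k j (smk n k j (Sum.inl (q.1.1, sigI q.2 q.1.2))))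
              (fun q : Bool × unitInterval =>
                if q.1 then wbase n k else wmk n k j (smk n k j (Sum.inr false))) z := by
          refine Continuous.sumElim ?_ ?_
          · refine ((continuous_wmk n k j).comp (continuous_smk n k j)).comp
              (continuous_inl.comp ?_)
            refine Continuous.prodMk (continuous_fst.comp continuous_fst) ?_
            refine Continuous.subtype_mk ?_ _
            have hu : Continuous fun z : (Sm n k j × unitInterval) × unitInterval => (z.2 : ℝ) :=
              continuous_subtype_val.comp continuous_snd
            have hs : Continuous fun z : (Sm n k j × unitInterval) × unitInterval =>
                (z.1.2 : ℝ) :=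
              continuous_subtype_val.comp (continuous_snd.comp continuous_fst)
            exact ((continuous_const.sub hu).mul
              (((continuous_const.mul hs)).min continuous_const)).add (hu.mul hs)
          · have : Continuous fun b : Bool =>
                if b then wbase n k else wmk n k j (smk n k j (Sum.inr false)) :=
              continuous_of_discreteTopology
            exact this.comp continuous_fst
        have heq : (fun q : SuspPt n k j × unitInterval =>
            Kmap n k (q.2, Qmap n k (Sum.inl ⟨j, q.1⟩)))
            = (fun z => Sum.elim
              (fun q : (Sm n k j × unitInterval) × unitInterval =>
                wmk n k j (smk n k j (Sum.inl (q.1.1, sigI q.2 q.1.2))))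
              (fun q : Bool × unitInterval =>
                if q.1 then wbase n k else wmk n k j (smk n k j (Sum.inr false))) z)
              ∘ ((Homeomorph.sumProdDistrib) : (Sm n k j × unitInterval ⊕ Bool) × unitInterval ≃ₜ _) := by
          funext q
          rcases q with ⟨p | b, u⟩
          · rfl
          · cases b <;> rfl
        rw [heq]
        exact e3.comp (Homeomorph.continuous _)
      have heq2 : (fun q : (Σ j : Idx n k, SuspPt n k j) × unitInterval =>
          Kmap n k (q.2, Qmap n k (Sum.inl q.1)))
          = (fun q : Σ j : Idx n k, SuspPt n k j × unitInterval =>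
              Kmap n k (q.2.2, Qmap n k (Sum.inl ⟨q.1, q.2.1⟩)))
            ∘ ((Homeomorph.sigmaProdDistrib) : (Σ j : Idx n k, SuspPt n k j) × unitInterval ≃ₜ _) := by
        funext q
        rcases q with ⟨⟨j, p⟩, u⟩
        rfl
      rw [heq2]
      exact e2.comp (Homeomorph.continuous _)
    have heq1 : (fun p : PP n k × unitInterval => Kmap n k (p.2, Qmap n k p.1))
        = (fun p => Sum.elim
            (fun q : (Σ j : Idx n k, SuspPt n k j) × unitInterval =>
              Kmap n k (q.2, Qmap n k (Sum.inl q.1)))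
            (fun _ : Unit × unitInterval => wbase n k) p)
          ∘ ((Homeomorph.sumProdDistrib) : ((Σ j : Idx n k, SuspPt n k j) ⊕ Unit) × unitInterval ≃ₜ _) := by
      funext p
      rcases p with ⟨q | u, v⟩
      · rfl
      · rfl
    rw [heq1]
    exact e1.comp (Homeomorph.continuous _)
  have : (fun p : unitInterval × PP n k => Kmap n k (p.1, Qmap n k p.2))
      = (fun p : PP n k × unitInterval => Kmap n k (p.2, Qmap n k p.1)) ∘ Prod.swap := by
    funext p; rfl
  rw [this]
  exact hswap.comp continuous_swap

end KHom

-- ### part 8a : coefficient functions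
section Coef

noncomputable def aaC (u t : ℝ) : ℝ := max ((1+u)*t - u) 0
noncomputable def bbC (u t : ℝ) : ℝ := max (u - (1+u)*t) 0
noncomputable def ccC (u t : ℝ) : ℝ := min (1+u) ((1 - u + (1+u)*t) / max (1-t) (1/2))

variable {u t : ℝ}

theorem aaC_nonneg : 0 ≤ aaC u t := le_max_right _ _
theorem bbC_nonneg : 0 ≤ bbC u t := le_max_right _ _

theorem denom_pos : (0:ℝ) < max (1-t) (1/2) := lt_of_lt_of_le (by norm_num) (le_max_right _ _)

theorem ccC_nonneg (hu0 : 0 ≤ u) (hu1 : u ≤ 1) (ht0 : 0 ≤ t) : 0 ≤ ccC u t := by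
  refine le_min (by linarith) (div_nonneg (by nlinarith) (le_of_lt denom_pos))

theorem ccC_caseA (hu0 : 0 ≤ u) (hu1 : u ≤ 1) (ht0 : 0 ≤ t) (ht1 : t ≤ 1)
    (h : u ≤ (1+u)*t) : ccC u t = 1 + u := by
  rw [ccC, min_eq_left]
  rcases le_total t (1/2) with hc | hc
  · rw [max_eq_left (by linarith)]
    rw [le_div_iff₀ (by linarith)]
    nlinarith
  · rw [max_eq_right (by linarith)]
    rw [le_div_iff₀ (by norm_num)]
    nlinarith

theorem ccC_caseB (hu0 : 0 ≤ u) (hu1 : u ≤ 1) (ht0 : 0 ≤ t) (ht1 : t ≤ 1)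
    (h : (1+u)*t ≤ u) : ccC u t = (1 - u + (1+u)*t) / (1-t) := by
  have ht2 : t ≤ 1/2 := by nlinarith
  rw [ccC, max_eq_left (by linarith), min_eq_right]
  rw [div_le_iff₀ (by linarith)]
  nlinarith

theorem sum_abc (hu0 : 0 ≤ u) (hu1 : u ≤ 1) (ht0 : 0 ≤ t) (ht1 : t ≤ 1) :
    aaC u t + bbC u t + ccC u t * (1 - t) = 1 := by
  rcases le_total u ((1+u)*t) with h | h
  · rw [aaC, max_eq_left (by linarith), bbC, max_eq_right (by linarith),
      ccC_caseA hu0 hu1 ht0 ht1 h]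
    ring
  · have ht2 : t ≤ 1/2 := by nlinarith
    rw [aaC, max_eq_right (by linarith), bbC, max_eq_left (by linarith),
      ccC_caseB hu0 hu1 ht0 ht1 h, div_mul_cancel₀ _ (show (1:ℝ) - t ≠ 0 by linarith)]
    ring

theorem ab_zero (hu0 : 0 ≤ u) : aaC u t = 0 ∨ bbC u t = 0 := by
  rcases le_total u ((1+u)*t) with h | h
  · right; rw [bbC, max_eq_right (by linarith)]
  · left; rw [aaC, max_eq_right (by linarith)]

theorem aaC_u0 (ht0 : 0 ≤ t) : aaC 0 t = t := by rw [aaC]; rw [max_eq_left] <;> linarith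
theorem bbC_u0 (ht0 : 0 ≤ t) : bbC 0 t = 0 := by rw [bbC]; rw [max_eq_right] <;> linarith
theorem ccC_u0 (ht0 : 0 ≤ t) (ht1 : t ≤ 1) : ccC 0 t = 1 := by
  rw [ccC, min_eq_left]
  · norm_num
  rw [le_div_iff₀ denom_pos]
  rcases le_total t (1/2) with hc | hc
  · rw [max_eq_left (by linarith)]; nlinarith
  · rw [max_eq_right (by linarith)]; nlinarith

theorem aaC_t0 (hu0 : 0 ≤ u) : aaC u 0 = 0 := by rw [aaC]; rw [max_eq_right] <;> linarith
theorem bbC_t0 (hu0 : 0 ≤ u) : bbC u 0 = u := by rw [bbC]; rw [max_eq_left] <;> linarith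
theorem ccC_t0 (hu0 : 0 ≤ u) (hu1 : u ≤ 1) : ccC u 0 = 1 - u := by
  rw [ccC]
  have : max (1-(0:ℝ)) (1/2) = 1 := by rw [max_eq_left] <;> norm_num
  rw [this]
  rw [min_eq_right] <;> norm_num
  linarith

theorem continuous_aaC : Continuous fun p : ℝ × ℝ => aaC p.1 p.2 := by
  unfold aaC
  exact (((continuous_const.add continuous_fst).mul continuous_snd).sub continuous_fst).max
    continuous_const

theorem continuous_bbC : Continuous fun p : ℝ × ℝ => bbC p.1 p.2 := by
  unfold bbC
  exact (continuous_fst.sub ((continuous_const.add continuous_fst).mul continuous_snd)).max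
    continuous_const

theorem continuous_ccC : Continuous fun p : ℝ × ℝ => ccC p.1 p.2 := by
  unfold ccC
  refine Continuous.min (continuous_const.add continuous_fst) ?_
  refine Continuous.div ?_ ?_ ?_
  · exact (continuous_const.sub continuous_fst).add
      ((continuous_const.add continuous_fst).mul continuous_snd)
  · exact (continuous_const.sub continuous_snd).max continuous_const
  · exact fun p => ne_of_gt denom_pos

end Coef

-- ### part 8b : the homotopy H on X
section HHom
variable (n k : ℕ)

theorem jfin_ne_zfin (hn : 0 < n) (j : Idx n k) : jfin n k j ≠ zfin n hn := by
  intro h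
  have h' : (jfin n k j).1 = (zfin n hn).1 := congrArg Fin.val h
  have h'' : j.1 = 0 := h'
  have := j.2.1
  omega

theorem Cset_zfin (hn : 0 < n) (j : Idx n k) (f : XX n k) (hf : f ∈ Cset n k j.1) :
    f.1 (zfin n hn) = 0 := by
  by_contra h
  rcases hf _ h with h0 | h0
  · exact (jfin_ne_zfin n k hn j).symm (by rw [Fin.ext_iff]; exact h0)
  · have : (zfin n hn : ℕ) = 0 := rfl
    have := j.2.1
    omega

noncomputable def Hraw (hn : 0 < n) (j : Idx n k) (u : ℝ) (f : XX n k) : Fin n → ℝ :=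
  fun v => aaC u (f.1 (jfin n k j)) * dl n (jfin n k j) v
    + bbC u (f.1 (jfin n k j)) * dl n (zfin n hn) v
    + ccC u (f.1 (jfin n k j)) * (f.1 v - f.1 (jfin n k j) * dl n (jfin n k j) v)

theorem Hraw_at_jfin (hn : 0 < n) (j : Idx n k) (u : ℝ) (f : XX n k) :
    Hraw n k hn j u f (jfin n k j) = aaC u (f.1 (jfin n k j)) := by
  rw [Hraw]
  rw [dl_self, dl_ne n (jfin_ne_zfin n k hn j)]
  ring

theorem Hraw_at_zfin (hn : 0 < n) (j : Idx n k) (u : ℝ) (f : XX n k)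
    (hf : f ∈ Cset n k j.1) :
    Hraw n k hn j u f (zfin n hn) = bbC u (f.1 (jfin n k j)) := by
  rw [Hraw]
  rw [dl_self, dl_ne n (jfin_ne_zfin n k hn j).symm, Cset_zfin n k hn j f hf]
  ring

theorem Hraw_at_other (hn : 0 < n) (j : Idx n k) (u : ℝ) (f : XX n k) (v : Fin n)
    (hv1 : v ≠ jfin n k j) (hv2 : v ≠ zfin n hn) :
    Hraw n k hn j u f v = ccC u (f.1 (jfin n k j)) * f.1 v := by
  rw [Hraw, dl_ne n hv1, dl_ne n hv2]
  ring

theorem mem_Hraw (hn : 0 < n) (j : Idx n k) (u : ℝ) (hu0 : 0 ≤ u) (hu1 : u ≤ 1)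
    (f : XX n k) (hf : f ∈ Cset n k j.1) :
    (∀ v, 0 ≤ Hraw n k hn j u f v) ∧ (∑ᶠ v, Hraw n k hn j u f v) = 1 ∧
      ∃ s ∈ indepFaces (lineGraphL n k), {v | Hraw n k hn j u f v ≠ 0} = ↑s := by
  set t := f.1 (jfin n k j) with htdef
  have ht0 : 0 ≤ t := X_nonneg n k f _
  have ht1 : t ≤ 1 := X_le_one n k f _
  have hcc := ccC_nonneg (u := u) (t := t) hu0 hu1 ht0
  refine (memX_iff _ _).2 ⟨?_, ?_, ?_⟩
  · intro v
    rw [Hraw]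
    have h3 : 0 ≤ f.1 v - t * dl n (jfin n k j) v := by
      by_cases hv : v = jfin n k j
      · subst hv; rw [dl_self]; simp [htdef]
      · rw [dl_ne n hv]; have := X_nonneg n k f v; linarith
    have h1 : 0 ≤ aaC u t * dl n (jfin n k j) v :=
      mul_nonneg aaC_nonneg (dl_nonneg _ _ _)
    have h2 : 0 ≤ bbC u t * dl n (zfin n hn) v :=
      mul_nonneg bbC_nonneg (dl_nonneg _ _ _)
    have h4 : 0 ≤ ccC u t * (f.1 v - t * dl n (jfin n k j) v) := mul_nonneg hcc h3
    linarith
  · show (∑ v, Hraw n k hn j u f v) = 1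
    unfold Hraw
    rw [Finset.sum_add_distrib, Finset.sum_add_distrib, ← Finset.mul_sum, ← Finset.mul_sum,
      ← Finset.mul_sum, sum_dl, sum_dl, Finset.sum_sub_distrib, ← Finset.mul_sum, sum_dl,
      X_sum n k f]
    have := sum_abc (u := u) (t := t) hu0 hu1 ht0 ht1
    linarith
  · have hcl : ∀ v, Hraw n k hn j u f v ≠ 0 →
        v = jfin n k j ∨ v = zfin n hn ∨ (f.1 v ≠ 0 ∧ k + j.1 ≤ (v : ℕ)) := by
      intro v hv
      by_cases h1 : v = jfin n k j
      · exact Or.inl h1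
      by_cases h2 : v = zfin n hn
      · exact Or.inr (Or.inl h2)
      right; right
      rw [Hraw_at_other n k hn j u f v h1 h2] at hv
      have hfv : f.1 v ≠ 0 := by
        intro h; rw [h, mul_zero] at hv; exact hv rfl
      refine ⟨hfv, ?_⟩
      rcases hf v hfv with h | h
      · exact absurd (Fin.ext h : v = jfin n k j) h1
      · exact h
    intro a b ha hb hadj
    rw [adjL] at hadj
    obtain ⟨hne, hd1, hd2⟩ := hadj
    have hjv : (jfin n k j : ℕ) = j.1 := rfl
    have hzv : (zfin n hn : ℕ) = 0 := rfl
    have hjk : j.1 < k := lt_of_lt_of_le j.2.2 (min_le_left k n)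
    have hj1 : 1 ≤ j.1 := j.2.1
    rcases hcl a ha with rfl | rfl | ⟨hfa, hta⟩
    · rcases hcl b hb with rfl | rfl | ⟨hfb, htb⟩
      · exact hne rfl
      · rw [Hraw_at_jfin] at ha
        rw [Hraw_at_zfin n k hn j u f hf] at hb
        rcases ab_zero (u := u) (t := t) hu0 with h | h
        · exact ha h
        · exact hb h
      · omega
    · rcases hcl b hb with rfl | rfl | ⟨hfb, htb⟩
      · rw [Hraw_at_zfin n k hn j u f hf] at ha
        rw [Hraw_at_jfin] at hb
        rcases ab_zero (u := u) (t := t) hu0 with h | h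
        · exact hb h
        · exact ha h
      · exact hne rfl
      · omega
    · rcases hcl b hb with rfl | rfl | ⟨hfb, htb⟩
      · omega
      · omega
      · refine X_indep n k f a b hfa hfb ?_
        rw [adjL]
        exact ⟨hne, hd1, hd2⟩

theorem mem_else (hn : 0 < n) (u : ℝ) (hu0 : 0 ≤ u) (hu1 : u ≤ 1)
    (f : XX n k) (hf : f ∈ Cset n k 0) :
    (∀ v, 0 ≤ (1 - u) * f.1 v + u * dl n (zfin n hn) v) ∧
      (∑ v, ((1 - u) * f.1 v + u * dl n (zfin n hn) v)) = 1 ∧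
      ∀ a b, ((1 - u) * f.1 a + u * dl n (zfin n hn) a) ≠ 0 →
        ((1 - u) * f.1 b + u * dl n (zfin n hn) b) ≠ 0 → ¬ (lineGraphL n k).Adj a b := by
  refine ⟨?_, ?_, ?_⟩
  · intro v
    have := X_nonneg n k f v
    have := dl_nonneg n (zfin n hn) v
    nlinarith
  · rw [Finset.sum_add_distrib, ← Finset.mul_sum, ← Finset.mul_sum, sum_dl, X_sum n k f]
    ring
  · have hcl : ∀ v, (1 - u) * f.1 v + u * dl n (zfin n hn) v ≠ 0 →
        f.1 v ≠ 0 ∨ v = zfin n hn := by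
      intro v hv
      by_cases h1 : f.1 v = 0
      · right
        by_contra h2
        rw [h1, dl_ne n h2] at hv
        exact hv (by ring)
      · exact Or.inl h1
    intro a b ha hb hadj
    have hadj' := hadj
    rw [adjL] at hadj'
    obtain ⟨hne, hd1, hd2⟩ := hadj'
    have hzv : (zfin n hn : ℕ) = 0 := rfl
    rcases hcl a ha with hfa | rfl
    · rcases hcl b hb with hfb | rfl
      · exact X_indep n k f a b hfa hfb hadj
      · rcases hf a hfa with h | h
        · omega
        · omega
    · rcases hcl b hb with hfb | rfl
      · rcases hf b hfb with h | h
        · omega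
        · omega
      · exact hne rfl

noncomputable def Hfun (hn : 0 < n) : unitInterval × XX n k → XX n k := fun p =>
  if h : ∃ j : Idx n k, p.2.1 (jfin n k j) ≠ 0 then
    ⟨Hraw n k hn h.choose (p.1 : ℝ) p.2,
      mem_Hraw n k hn h.choose (p.1 : ℝ) (unitInterval.nonneg p.1) (unitInterval.le_one p.1) p.2
        (mem_Cset_of n k h.choose p.2 h.choose_spec)⟩
  else
    ⟨fun v => (1 - (p.1 : ℝ)) * p.2.1 v + (p.1 : ℝ) * dl n (zfin n hn) v,
      (memX_iff _ _).2 (mem_else n k hn (p.1 : ℝ) (unitInterval.nonneg p.1) (unitInterval.le_one p.1) p.2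
        (mem_Cset_zero_of_not n k p.2 h))⟩

theorem Hfun_val_j (hn : 0 < n) (j : Idx n k) (u : unitInterval) (f : XX n k)
    (hj : f.1 (jfin n k j) ≠ 0) :
    (Hfun n k hn (u, f)).1 = Hraw n k hn j (u : ℝ) f := by
  have hex : ∃ j : Idx n k, f.1 (jfin n k j) ≠ 0 := ⟨j, hj⟩
  erw [Hfun, dif_pos hex]
  have hcj : hex.choose = j := unique_idx n k f _ j hex.choose_spec hj
  subst hcj
  rfl

theorem Hfun_val_0 (hn : 0 < n) (u : unitInterval) (f : XX n k) (hf : f ∈ Cset n k 0) :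
    (Hfun n k hn (u, f)).1
      = fun v => (1 - (u : ℝ)) * f.1 v + (u : ℝ) * dl n (zfin n hn) v := by
  erw [Hfun, dif_neg]
  push_neg
  intro j
  exact Cset0_vanish n k f hf j

theorem Hraw_t0 (hn : 0 < n) (j : Idx n k) (u : ℝ) (hu0 : 0 ≤ u) (hu1 : u ≤ 1)
    (f : XX n k) (hj0 : f.1 (jfin n k j) = 0) :
    Hraw n k hn j u f = fun v => (1 - u) * f.1 v + u * dl n (zfin n hn) v := by
  funext v
  rw [Hraw, hj0, aaC_t0 hu0, bbC_t0 hu0, ccC_t0 hu0 hu1]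
  ring

theorem continuous_Hfun (hn : 0 < n) (hk : 2 ≤ k) : Continuous (Hfun n k hn) := by
  have hcover : ⋃ j : Fin (min k n),
      ((Set.univ : Set unitInterval) ×ˢ Cset n k j.1) = Set.univ := by
    rw [Set.eq_univ_iff_forall]
    rintro ⟨u, f⟩
    rcases cover n k hn hk f with ⟨j, hj, hmem⟩
    exact Set.mem_iUnion.2 ⟨⟨j, hj⟩, Set.mem_prod.2 ⟨trivial, hmem⟩⟩
  refine LocallyFinite.continuous (locallyFinite_of_finite _) hcover
    (fun j => IsClosed.prod isClosed_univ (isClosed_Cset n k j.1)) ?_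
  intro j
  rw [continuousOn_iff_continuous_restrict]
  by_cases h0 : j.1 = 0
  · have heq : ((Set.univ : Set unitInterval) ×ˢ Cset n k j.1).domRestrict (Hfun n k hn)
        = fun p : ↥((Set.univ : Set unitInterval) ×ˢ Cset n k j.1) =>
          (⟨fun v => (1 - (p.1.1 : ℝ)) * p.1.2.1 v + (p.1.1 : ℝ) * dl n (zfin n hn) v,
            (memX_iff _ _).2 (mem_else n k hn (p.1.1 : ℝ) (unitInterval.nonneg p.1.1) (unitInterval.le_one p.1.1) p.1.2
              (by
                have hCeq : Cset n k j.1 = Cset n k 0 := by rw [h0]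
                exact hCeq ▸ p.2.2))⟩ : XX n k) := by
      funext p
      apply Subtype.ext
      show (Hfun n k hn (p.1.1, p.1.2)).1 = _
      have hCeq : Cset n k j.1 = Cset n k 0 := by rw [h0]
      rw [Hfun_val_0 n k hn p.1.1 p.1.2 (hCeq ▸ p.2.2)]
    rw [heq]
    refine Continuous.subtype_mk ?_ _
    refine continuous_pi fun v => ?_
    have hu : Continuous fun p : ↥((Set.univ : Set unitInterval) ×ˢ Cset n k j.1) => (p.1.1 : ℝ) :=
      continuous_subtype_val.comp (continuous_fst.comp continuous_subtype_val)
    have hfv : Continuous fun p : ↥((Set.univ : Set unitInterval) ×ˢ Cset n k j.1) => p.1.2.1 v :=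
      (continuous_eval _ _).comp (continuous_snd.comp continuous_subtype_val)
    exact ((continuous_const.sub hu).mul hfv).add (hu.mul continuous_const)
  · have h1 : 1 ≤ j.1 := Nat.one_le_iff_ne_zero.2 h0
    set j' : Idx n k := ⟨j.1, h1, j.2⟩ with hj'
    have heq : ((Set.univ : Set unitInterval) ×ˢ Cset n k j.1).domRestrict (Hfun n k hn)
        = fun p : ↥((Set.univ : Set unitInterval) ×ˢ Cset n k j.1) =>
          (⟨Hraw n k hn j' (p.1.1 : ℝ) p.1.2,
            mem_Hraw n k hn j' (p.1.1 : ℝ) (unitInterval.nonneg p.1.1) (unitInterval.le_one p.1.1) p.1.2 p.2.2⟩ : XX n k) := by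
      funext p
      apply Subtype.ext
      show (Hfun n k hn (p.1.1, p.1.2)).1 = _
      by_cases hj : p.1.2.1 (jfin n k j') ≠ 0
      · exact Hfun_val_j n k hn j' p.1.1 p.1.2 hj
      · push_neg at hj
        rw [Hfun_val_0 n k hn p.1.1 p.1.2 (mem_Cset_zero_of_mem n k j' p.1.2 p.2.2 hj)]
        exact (Hraw_t0 n k hn j' (p.1.1 : ℝ) (unitInterval.nonneg p.1.1)
          (unitInterval.le_one p.1.1) p.1.2 hj).symm
    rw [heq]
    refine Continuous.subtype_mk ?_ _
    refine continuous_pi fun v => ?_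
    have hu : Continuous fun p : ↥((Set.univ : Set unitInterval) ×ˢ Cset n k j.1) => (p.1.1 : ℝ) :=
      continuous_subtype_val.comp (continuous_fst.comp continuous_subtype_val)
    have ht : Continuous fun p : ↥((Set.univ : Set unitInterval) ×ˢ Cset n k j.1) => p.1.2.1 (jfin n k j') :=
      (continuous_eval _ _).comp (continuous_snd.comp continuous_subtype_val)
    have hfv : Continuous fun p : ↥((Set.univ : Set unitInterval) ×ˢ Cset n k j.1) => p.1.2.1 v :=
      (continuous_eval _ _).comp (continuous_snd.comp continuous_subtype_val)
    have haa : Continuous fun p : ↥((Set.univ : Set unitInterval) ×ˢ Cset n k j.1) =>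
        aaC (p.1.1 : ℝ) (p.1.2.1 (jfin n k j')) :=
      continuous_aaC.comp (hu.prodMk ht)
    have hbb : Continuous fun p : ↥((Set.univ : Set unitInterval) ×ˢ Cset n k j.1) =>
        bbC (p.1.1 : ℝ) (p.1.2.1 (jfin n k j')) :=
      continuous_bbC.comp (hu.prodMk ht)
    have hcc : Continuous fun p : ↥((Set.univ : Set unitInterval) ×ˢ Cset n k j.1) =>
        ccC (p.1.1 : ℝ) (p.1.2.1 (jfin n k j')) :=
      continuous_ccC.comp (hu.prodMk ht)
    exact ((haa.mul continuous_const).add (hbb.mul continuous_const)).add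
      (hcc.mul (hfv.sub (ht.mul continuous_const)))

end HHom

-- ### part 9a : endpoints of H
section HEnd
variable (n k : ℕ)

theorem Hfun_zero (hn : 0 < n) (f : XX n k) : Hfun n k hn (0, f) = f := by
  apply Subtype.ext
  by_cases h : ∃ j : Idx n k, f.1 (jfin n k j) ≠ 0
  · obtain ⟨j, hj⟩ := h
    rw [Hfun_val_j n k hn j 0 f hj]
    funext v
    show aaC ((0 : unitInterval) : ℝ) (f.1 (jfin n k j)) * dl n (jfin n k j) v
        + bbC ((0 : unitInterval) : ℝ) (f.1 (jfin n k j)) * dl n (zfin n hn) v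
        + ccC ((0 : unitInterval) : ℝ) (f.1 (jfin n k j))
          * (f.1 v - f.1 (jfin n k j) * dl n (jfin n k j) v) = f.1 v
    have h0 : ((0 : unitInterval) : ℝ) = 0 := rfl
    rw [h0, aaC_u0 (X_nonneg n k f _), bbC_u0 (X_nonneg n k f _),
      ccC_u0 (X_nonneg n k f _) (X_le_one n k f _)]
    ring
  · rw [Hfun_val_0 n k hn 0 f (mem_Cset_zero_of_not n k f h)]
    funext v
    show (1 - ((0 : unitInterval) : ℝ)) * f.1 v + ((0 : unitInterval) : ℝ) * dl n (zfin n hn) v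
        = f.1 v
    norm_num

theorem embF_resXraw (j : Idx n k) (f : XX n k) (hf : f ∈ Cset n k j.1) (v : Fin n) :
    embF n k j.1 (resXraw n k j f) v
      = (f.1 v - f.1 (jfin n k j) * dl n (jfin n k j) v) / (1 - f.1 (jfin n k j)) := by
  have hjk : j.1 < k := lt_of_lt_of_le j.2.2 (min_le_left k n)
  by_cases h : k + j.1 ≤ (v : ℕ)
  · rw [embF, dif_pos h]
    show f.1 (liftF n k j.1 _) / _ = _
    have hlift : liftF n k j.1 ⟨(v : ℕ) - (k + j.1), by have := v.2; omega⟩ = v := by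
      rw [Fin.ext_iff]
      show (v : ℕ) - (k + j.1) + (k + j.1) = v
      omega
    rw [hlift, dl_ne n (show v ≠ jfin n k j by
      intro hvj
      have : (v : ℕ) = j.1 := congrArg Fin.val hvj
      omega)]
    ring_nf
  · rw [embF, dif_neg h]
    by_cases hvj : v = jfin n k j
    · subst hvj
      rw [dl_self]
      field_simp
      simp
    · have hfv : f.1 v = 0 := by
        by_contra hfv
        rcases hf v hfv with h2 | h2
        · exact hvj (Fin.ext h2)
        · exact h h2
      rw [hfv, dl_ne n hvj]
      ring_nf

theorem Hfun_one (hn : 0 < n) (f : XX n k) :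
    Hfun n k hn (1, f) = psiW n k hn (phi n k f) := by
  by_cases h : ∃ j : Idx n k, f.1 (jfin n k j) ≠ 0
  · obtain ⟨j, hj⟩ := h
    have hf : f ∈ Cset n k j.1 := mem_Cset_of n k j f hj
    rw [phi_spec n k j f hj hf]
    show Hfun n k hn (1, f) = psiS n k hn j (phiC n k j f hf)
    set t := f.1 (jfin n k j) with htdef
    have ht0 : 0 ≤ t := X_nonneg n k f _
    have ht1 : t ≤ 1 := X_le_one n k f _
    apply Subtype.ext
    rw [Hfun_val_j n k hn j 1 f hj]
    by_cases h1 : t = 1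
    · rw [phiC, dif_pos h1]
      show Hraw n k hn j ((1 : unitInterval) : ℝ) f = (dlX n k (jfin n k j)).1
      have hfd : f.1 = dl n (jfin n k j) := eq_dl_of_one n k f _ h1
      funext v
      show aaC ((1 : unitInterval) : ℝ) t * dl n (jfin n k j) v
          + bbC ((1 : unitInterval) : ℝ) t * dl n (zfin n hn) v
          + ccC ((1 : unitInterval) : ℝ) t * (f.1 v - t * dl n (jfin n k j) v)
          = dl n (jfin n k j) v
      have hu1 : ((1 : unitInterval) : ℝ) = 1 := rfl
      have haa : aaC 1 t = 1 := by rw [h1, aaC]; norm_num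
      have hbb : bbC 1 t = 0 := by rw [h1, bbC]; norm_num
      have hfv : f.1 v - t * dl n (jfin n k j) v = 0 := by
        rw [hfd, h1]
        show dl n (jfin n k j) v - 1 * dl n (jfin n k j) v = 0
        ring
      rw [hu1, haa, hbb, hfv]
      ring
    · rw [phiC, dif_neg h1]
      have h1t : (1 : ℝ) - t ≠ 0 := by
        intro hc
        exact h1 (by linarith [sub_eq_zero.1 hc])
      show Hraw n k hn j ((1 : unitInterval) : ℝ) f = (psiP n k hn j (Sum.inl
        (⟨resXraw n k j f, mem_resX n k j f hf h1⟩, ⟨1 - t, _⟩))).1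
      have hu1 : ((1 : unitInterval) : ℝ) = 1 := rfl
      rcases le_or_gt (1/2 : ℝ) t with hc | hc
      · -- branchS case
        have hcond : ((⟨1 - t, by constructor <;> [linarith; linarith]⟩ : unitInterval) : ℝ)
            ≤ 1/2 := by
          show 1 - t ≤ 1/2
          linarith
        show Hraw n k hn j ((1 : unitInterval) : ℝ) f =
          (if ((⟨1 - t, _⟩ : unitInterval) : ℝ) ≤ 1/2 then
            branchS n k hn j (⟨resXraw n k j f, mem_resX n k j f hf h1⟩, ⟨1 - t, _⟩)
          else branchN n k hn j (⟨resXraw n k j f, mem_resX n k j f hf h1⟩, ⟨1 - t, _⟩)).1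
        rw [if_pos hcond]
        funext v
        show aaC ((1 : unitInterval) : ℝ) t * dl n (jfin n k j) v
            + bbC ((1 : unitInterval) : ℝ) t * dl n (zfin n hn) v
            + ccC ((1 : unitInterval) : ℝ) t * (f.1 v - t * dl n (jfin n k j) v)
            = min (2 * (1 - t)) 1 * embF n k j.1 (resXraw n k j f) v
              + (1 - min (2 * (1 - t)) 1) * dl n (jfin n k j) v
        rw [hu1, embF_resXraw n k j f hf v]
        have haa : aaC 1 t = 2*t - 1 := by rw [aaC]; rw [max_eq_left] <;> linarith
        have hbb : bbC 1 t = 0 := by rw [bbC]; rw [max_eq_right] <;> linarith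
        have hcc : ccC 1 t = 2 := by
          have := ccC_caseA (u := 1) (t := t) (by norm_num) (le_refl 1) ht0 ht1
            (by linarith)
          rw [this]; norm_num
        have hmin : min (2 * (1 - t)) 1 = 2 * (1 - t) := by
          rw [min_eq_left]; linarith
        rw [haa, hbb, hcc, hmin]
        rw [← htdef]
        field_simp
        ring
      · -- branchN case
        have hcond : ¬ ((⟨1 - t, by constructor <;> [linarith; linarith]⟩ : unitInterval) : ℝ)
            ≤ 1/2 := by
          show ¬ (1 - t ≤ 1/2)
          linarith
        show Hraw n k hn j ((1 : unitInterval) : ℝ) f =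
          (if ((⟨1 - t, _⟩ : unitInterval) : ℝ) ≤ 1/2 then
            branchS n k hn j (⟨resXraw n k j f, mem_resX n k j f hf h1⟩, ⟨1 - t, _⟩)
          else branchN n k hn j (⟨resXraw n k j f, mem_resX n k j f hf h1⟩, ⟨1 - t, _⟩)).1
        rw [if_neg hcond]
        funext v
        show aaC ((1 : unitInterval) : ℝ) t * dl n (jfin n k j) v
            + bbC ((1 : unitInterval) : ℝ) t * dl n (zfin n hn) v
            + ccC ((1 : unitInterval) : ℝ) t * (f.1 v - t * dl n (jfin n k j) v)
            = min (2 - 2 * (1 - t)) 1 * embF n k j.1 (resXraw n k j f) v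
              + (1 - min (2 - 2 * (1 - t)) 1) * dl n (zfin n hn) v
        rw [hu1, embF_resXraw n k j f hf v]
        have haa : aaC 1 t = 0 := by rw [aaC]; rw [max_eq_right] <;> linarith
        have hbb : bbC 1 t = 1 - 2*t := by rw [bbC]; rw [max_eq_left] <;> linarith
        have hcc : ccC 1 t = (1 - 1 + (1+1)*t) / (1 - t) :=
          ccC_caseB (by norm_num) (le_refl 1) ht0 ht1 (by linarith)
        have hmin : min (2 - 2 * (1 - t)) 1 = 2 * t := by
          rw [min_eq_left] <;> linarith
        rw [haa, hbb, hcc, hmin]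
        rw [← htdef]
        field_simp
        ring
  · rw [phi, dif_neg h]
    apply Subtype.ext
    rw [Hfun_val_0 n k hn 1 f (mem_Cset_zero_of_not n k f h)]
    show (fun v => (1 - ((1 : unitInterval) : ℝ)) * f.1 v
        + ((1 : unitInterval) : ℝ) * dl n (zfin n hn) v) = (dlX n k (zfin n hn)).1
    funext v
    show (1 - ((1 : unitInterval) : ℝ)) * f.1 v + ((1 : unitInterval) : ℝ) * dl n (zfin n hn) v
        = dl n (zfin n hn) v
    norm_num

end HEnd

-- ### part 9b : endpoints of K
section KEnd
variable (n k : ℕ)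

theorem jfin_lt (j j' : Idx n k) : ((jfin n k j' : ℕ)) < k + j.1 := by
  have h1 : (jfin n k j' : ℕ) = j'.1 := rfl
  have h2 : j'.1 < k := lt_of_lt_of_le j'.2.2 (min_le_left k n)
  omega

theorem liftF_ne_jfin (j : Idx n k) (a : Fin (n - k - j.1)) :
    liftF n k j.1 a ≠ jfin n k j := by
  intro h
  have h' : (a : ℕ) + (k + j.1) = j.1 := congrArg Fin.val h
  have h2 : j.1 < k := lt_of_lt_of_le j.2.2 (min_le_left k n)
  omega

theorem phi_dlzfin (hn : 0 < n) : phi n k (dlX n k (zfin n hn)) = wbase n k := by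
  rw [phi, dif_neg]
  push_neg
  intro j
  show dl n (zfin n hn) (jfin n k j) = 0
  exact dl_ne n (jfin_ne_zfin n k hn j)

theorem phi_branchN (hn : 0 < n) (j : Idx n k) (x : Sm n k j) (s : unitInterval) :
    phi n k (branchN n k hn j (x, s)) = wbase n k := by
  rw [phi, dif_neg]
  push_neg
  intro j'
  show min (2 - 2*(s:ℝ)) 1 * embF n k j.1 x.1 (jfin n k j')
      + (1 - min (2 - 2*(s:ℝ)) 1) * dl n (zfin n hn) (jfin n k j') = 0
  rw [embF_eq_zero n k j.1 x.1 _ (jfin_lt n k j j'), dl_ne n (jfin_ne_zfin n k hn j')]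
  ring

theorem branchS_jfin_val (hn : 0 < n) (j : Idx n k) (x : Sm n k j) (s : unitInterval) :
    (branchS n k hn j (x, s)).1 (jfin n k j) = 1 - min (2*(s:ℝ)) 1 := by
  show min (2*(s:ℝ)) 1 * embF n k j.1 x.1 (jfin n k j)
      + (1 - min (2*(s:ℝ)) 1) * dl n (jfin n k j) (jfin n k j) = _
  rw [embF_eq_zero n k j.1 x.1 _ (jfin_lt n k j j), dl_self]
  ring

theorem phi_branchS_half (hn : 0 < n) (j : Idx n k) (x : Sm n k j) (s : unitInterval)
    (hs : min (2*(s:ℝ)) 1 = 1) : phi n k (branchS n k hn j (x, s)) = wbase n k := by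
  rw [phi, dif_neg]
  push_neg
  intro j'
  show min (2*(s:ℝ)) 1 * embF n k j.1 x.1 (jfin n k j')
      + (1 - min (2*(s:ℝ)) 1) * dl n (jfin n k j) (jfin n k j') = 0
  rw [hs, embF_eq_zero n k j.1 x.1 _ (jfin_lt n k j j')]
  ring

theorem K_zero (hn : 0 < n) : ∀ w : WW n k, Kq n k 0 w = phi n k (psiW n k hn w) := by
  intro w
  obtain ⟨a, rfl⟩ := Quot.exists_rep w
  rcases a with ⟨j, z⟩ | u
  · obtain ⟨p, rfl⟩ := Quot.exists_rep z
    rcases p with ⟨x, s⟩ | b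
    · show wmk n k j (smk n k j (Sum.inl (x, sigI 0 s)))
        = phi n k (if (s:ℝ) ≤ 1/2 then branchS n k hn j (x, s) else branchN n k hn j (x, s))
      by_cases hs : (s:ℝ) ≤ 1/2
      · have hmin : min (2*(s:ℝ)) 1 = 2*(s:ℝ) := min_eq_left (by linarith)
        rw [if_pos hs]
        by_cases hs2 : (s:ℝ) = 1/2
        · rw [phi_branchS_half n k hn j x s (by rw [hs2]; norm_num)]
          rw [smk_inl_one n k j x _ (by
            show (1 - ((0:unitInterval):ℝ)) * min (2*(s:ℝ)) 1 + ((0:unitInterval):ℝ) * (s:ℝ) = 1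
            rw [hs2]; norm_num), smk_north, wmk_north]
        · have hslt : (s:ℝ) < 1/2 := lt_of_le_of_ne hs hs2
          have hjne : (branchS n k hn j (x, s)).1 (jfin n k j) ≠ 0 := by
            rw [branchS_jfin_val n k hn j x s, hmin]
            intro hc
            apply hs2
            linarith
          rw [phi_spec n k j _ hjne (mem_Cset_of n k j _ hjne)]
          by_cases hs0 : (s:ℝ) = 0
          · rw [phiC, dif_pos (by
              rw [branchS_jfin_val n k hn j x s, hmin, hs0]; ring)]
            rw [smk_inl_zero n k j x _ (by
              show (1 - ((0:unitInterval):ℝ)) * min (2*(s:ℝ)) 1 + ((0:unitInterval):ℝ) * (s:ℝ) = 0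
              rw [hs0]; norm_num)]
          · have hspos : 0 < (s:ℝ) := lt_of_le_of_ne s.2.1 (Ne.symm hs0)
            rw [phiC, dif_neg (by
              rw [branchS_jfin_val n k hn j x s, hmin]
              intro hc
              apply hs0
              linarith)]
            apply congrArg (fun z : Sm n k j × unitInterval => wmk n k j (smk n k j (Sum.inl z)))
            rw [Prod.ext_iff]
            constructor
            · apply Subtype.ext
              funext a
              show x.1 a = (branchS n k hn j (x, s)).1 (liftF n k j.1 a)
                  / (1 - (branchS n k hn j (x, s)).1 (jfin n k j))
              have hv : (branchS n k hn j (x, s)).1 (liftF n k j.1 a)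
                  = 2*(s:ℝ) * x.1 a := by
                show min (2*(s:ℝ)) 1 * embF n k j.1 x.1 (liftF n k j.1 a)
                    + (1 - min (2*(s:ℝ)) 1) * dl n (jfin n k j) (liftF n k j.1 a) = _
                rw [embF_liftF, dl_ne n (liftF_ne_jfin n k j a), hmin]
                ring
              rw [hv, branchS_jfin_val n k hn j x s, hmin]
              field_simp
              ring
            · apply Subtype.ext
              show (1 - ((0:unitInterval):ℝ)) * min (2*(s:ℝ)) 1 + ((0:unitInterval):ℝ) * (s:ℝ)
                  = 1 - (branchS n k hn j (x, s)).1 (jfin n k j)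
              rw [branchS_jfin_val n k hn j x s, hmin]
              norm_num
      · rw [if_neg hs, phi_branchN n k hn j x s]
        rw [smk_inl_one n k j x _ (by
          show (1 - ((0:unitInterval):ℝ)) * min (2*(s:ℝ)) 1 + ((0:unitInterval):ℝ) * (s:ℝ) = 1
          rw [min_eq_right (by linarith)]
          norm_num), smk_north, wmk_north]
    · cases b
      · show wmk n k j (smk n k j (Sum.inr false)) = phi n k (dlX n k (jfin n k j))
        have hone : (dlX n k (jfin n k j)).1 (jfin n k j) = 1 := dl_self n _
        have hne : (dlX n k (jfin n k j)).1 (jfin n k j) ≠ 0 := by rw [hone]; norm_num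
        rw [phi_spec n k j _ hne (mem_Cset_of n k j _ hne), phiC, dif_pos hone]
      · show wbase n k = phi n k (dlX n k (zfin n hn))
        rw [phi_dlzfin n k hn]
  · cases u
    show wbase n k = phi n k (dlX n k (zfin n hn))
    rw [phi_dlzfin n k hn]

theorem K_one : ∀ w : WW n k, Kq n k 1 w = w := by
  intro w
  obtain ⟨a, rfl⟩ := Quot.exists_rep w
  rcases a with ⟨j, z⟩ | u
  · obtain ⟨p, rfl⟩ := Quot.exists_rep z
    rcases p with ⟨x, s⟩ | b
    · show wmk n k j (smk n k j (Sum.inl (x, sigI 1 s)))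
        = wmk n k j (smk n k j (Sum.inl (x, s)))
      apply congrArg (fun z : Sm n k j × unitInterval => wmk n k j (smk n k j (Sum.inl z)))
      rw [Prod.ext_iff]
      refine ⟨rfl, ?_⟩
      apply Subtype.ext
      show (1 - ((1:unitInterval):ℝ)) * min (2*(s:ℝ)) 1 + ((1:unitInterval):ℝ) * (s:ℝ) = (s:ℝ)
      norm_num
    · cases b
      · rfl
      · show wbase n k = wmk n k j (smk n k j (Sum.inr true))
        rw [smk_north, wmk_north]
  · cases u
    rfl

end KEnd

-- ### part 10 : assembly
section Assemble
variable (n k : ℕ)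

noncomputable def theEquiv (hn : 0 < n) (hk : 2 ≤ k) :
    ContinuousMap.HomotopyEquiv (XX n k) (WW n k) where
  toFun := ⟨phi n k, continuous_phi n k hn hk⟩
  invFun := ⟨psiW n k hn, continuous_psiW n k hn⟩
  left_inv := by
    have hcont : Continuous (fun p : unitInterval × XX n k =>
        Hfun n k hn (unitInterval.symm p.1, p.2)) :=
      (continuous_Hfun n k hn hk).comp
        ((unitInterval.continuous_symm.comp continuous_fst).prodMk continuous_snd)
    refine ⟨{ toContinuousMap := ⟨fun p => Hfun n k hn (unitInterval.symm p.1, p.2), hcont⟩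
              map_zero_left := ?_
              map_one_left := ?_ }⟩
    · intro f
      show Hfun n k hn (unitInterval.symm 0, f) = psiW n k hn (phi n k f)
      rw [unitInterval.symm_zero]
      exact Hfun_one n k hn f
    · intro f
      show Hfun n k hn (unitInterval.symm 1, f) = f
      rw [unitInterval.symm_one]
      exact Hfun_zero n k hn f
  right_inv := by
    refine ⟨{ toContinuousMap := ⟨Kmap n k, continuous_Kmap n k⟩
              map_zero_left := ?_
              map_one_left := ?_ }⟩
    · intro w
      exact K_zero n k hn w
    · intro w
      exact K_one n k w

end Assemble

end IW

/-- For `n ≥ 1`, `k ≥ 2`, the complex `𝓛^k_n = Ind(L^k_n)` is homotopy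
equivalent to the wedge over `1 ≤ i < min{k,n}` of `susp(𝓛^k_{n-k-i})`. -/
theorem indComplex_lineGraph_wedge {n k : ℕ} (hn : 1 ≤ n) (hk : 2 ≤ k) :
    Nonempty (ContinuousMap.HomotopyEquiv
      (realization (indepFaces (lineGraphL n k)))
      (Wedge (fun i : {i : ℕ // 1 ≤ i ∧ i < min k n} =>
          Susp (realization (indepFaces (lineGraphL (n - k - i.1) k))))
        (fun i => Susp.north _))) :=
  ⟨IW.theEquiv n k hn hk⟩
end
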